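/- arXiv:1307.1562 — 3 statements merged into one kernel-verified Lean document; each statement's English description precedes it below -/
import Mathlib

section
/- Let t ≥ 1 be an integer and G a (2t+1)-regular graph. If X ⊆ E(G) is a smallest (2 + 1/t)-minimal set, then |X| ≤ min{ (|V(G)|/2 − α(G))·(2t+1), (t/2)·|V(G)| }, where α(G) is the independence number of G. -/
open Finset

/-- A finite loopless multigraph with vertex type `V` and edge type `E`;
`ends e` is the unordered pair of the two distinct endpoints of the edge `e`. -/
structure Multigraph (V E : Type) where
  ends : E → Sym2 V
  not_loop : ∀ e, ¬ (ends e).IsDiag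

namespace Multigraph

variable {V E : Type} [Fintype V] [Fintype E] [DecidableEq V] [DecidableEq E]

/-- The edge `e` is incident with the vertex `v`. -/
def Inc (G : Multigraph V E) (v : V) (e : E) : Prop := v ∈ G.ends e

instance (G : Multigraph V E) (v : V) (e : E) : Decidable (G.Inc v e) :=
  inferInstanceAs (Decidable (v ∈ G.ends e))

/-- The set of edges incident with `v`. -/
def incEdges (G : Multigraph V E) (v : V) : Finset E :=
  Finset.univ.filter fun e => G.Inc v e

/-- The degree of a vertex. -/
def degree (G : Multigraph V E) (v : V) : ℕ := (G.incEdges v).card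

/-- `G` is `k`-regular. -/
def IsRegular (G : Multigraph V E) (k : ℕ) : Prop := ∀ v, G.degree v = k

/-- The set `N_σ` of negative edges of a signature `σ : E → ℤˣ`. -/
def negEdges (G : Multigraph V E) (σ : E → ℤˣ) : Finset E :=
  Finset.univ.filter fun e => σ e = -1

/-- `τ` assigns a sign to every half-edge (i.e. to each edge at each of its endpoints);
it is an orientation of the signed graph `(G, σ)` if for every edge `e = uv` the two
half-edge signs multiply to `-σ e`. -/
def IsOrientation (G : Multigraph V E) (σ : E → ℤˣ) (τ : E → V → ℤˣ) : Prop :=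
  ∀ e u v, G.ends e = s(u, v) → τ e u * τ e v = - σ e

/-- The boundary `δf(v) = ∑_{h at v} τ(h) f(e_h)` of `f` at `v`. -/
def boundary {R : Type} [CommRing R] (G : Multigraph V E) (τ : E → V → ℤˣ)
    (f : E → R) (v : V) : R :=
  ∑ e ∈ G.incEdges v, (((τ e v : ℤˣ) : ℤ) : R) * f e

/-- `f` is a nowhere-zero `r`-flow on the signed graph `(G, σ)`:
for some orientation all boundaries vanish and `1 ≤ |f e| ≤ r - 1` for every edge. -/
def IsNZFlow (G : Multigraph V E) (σ : E → ℤˣ) (r : ℝ) (f : E → ℝ) : Prop :=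
  ∃ τ, G.IsOrientation σ τ ∧ (∀ v, G.boundary τ f v = 0) ∧
    ∀ e, 1 ≤ |f e| ∧ |f e| ≤ r - 1

/-- `(G, σ)` admits a nowhere-zero `r`-flow. -/
def HasNZFlow (G : Multigraph V E) (σ : E → ℤˣ) (r : ℝ) : Prop :=
  ∃ f, G.IsNZFlow σ r f

/-- `f` is a modular nowhere-zero `r`-flow on `(G, σ)`: for some orientation all
boundaries are `≡ 0 (mod r)` and `1 ≤ |f e| ≤ r - 1` for every edge. -/
def IsModularNZFlow (G : Multigraph V E) (σ : E → ℤˣ) (r : ℝ) (f : E → ℝ) : Prop :=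
  ∃ τ, G.IsOrientation σ τ ∧ (∀ v, ∃ k : ℤ, G.boundary τ f v = k * r) ∧
    ∀ e, 1 ≤ |f e| ∧ |f e| ≤ r - 1

/-- `f` is an integer-valued nowhere-zero `n`-flow on `(G, σ)`. -/
def IsIntNZFlow (G : Multigraph V E) (σ : E → ℤˣ) (n : ℕ) (f : E → ℤ) : Prop :=
  ∃ τ, G.IsOrientation σ τ ∧ (∀ v, G.boundary τ f v = 0) ∧
    ∀ e, 1 ≤ |f e| ∧ |f e| ≤ (n : ℤ) - 1

/-- `(G, σ)` admits an integer nowhere-zero `n`-flow. -/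
def HasIntNZFlow (G : Multigraph V E) (σ : E → ℤˣ) (n : ℕ) : Prop :=
  ∃ f, G.IsIntNZFlow σ n f

/-- `(G, σ)` is flow-admissible: it has a nowhere-zero `r`-flow for some `r ≥ 2`. -/
def FlowAdmissible (G : Multigraph V E) (σ : E → ℤˣ) : Prop :=
  ∃ r : ℝ, 2 ≤ r ∧ G.HasNZFlow σ r

/-- The circular flow number `F_c(G, σ)` (the least `r` admitting a nowhere-zero `r`-flow). -/
noncomputable def Fc (G : Multigraph V E) (σ : E → ℤˣ) : ℝ :=
  sInf {r : ℝ | 2 ≤ r ∧ G.HasNZFlow σ r}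

/-- The integer flow number `F(G, σ)` (the least `n` admitting an integer
nowhere-zero `n`-flow). -/
noncomputable def Fi (G : Multigraph V E) (σ : E → ℤˣ) : ℕ :=
  sInf {n : ℕ | G.HasIntNZFlow σ n}

/-- The flow spectrum `S(G)` of `G`. -/
def Spectrum (G : Multigraph V E) : Set ℝ :=
  {r | ∃ σ : E → ℤˣ, G.FlowAdmissible σ ∧ G.Fc σ = r}

/-- The integer flow spectrum `S̄(G)` of `G`. -/
def IntSpectrum (G : Multigraph V E) : Set ℕ :=
  {n | ∃ σ : E → ℤˣ, G.FlowAdmissible σ ∧ G.Fi σ = n}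

/-- `F` is the edge set of a spanning `t`-regular subgraph (a `t`-factor) of `G`. -/
def IsFactor (G : Multigraph V E) (t : ℕ) (F : Finset E) : Prop :=
  ∀ v, (G.incEdges v ∩ F).card = t

/-- `G` has a `t`-factor. -/
def HasFactor (G : Multigraph V E) (t : ℕ) : Prop := ∃ F, G.IsFactor t F

/-- `G - X` is bipartite. -/
def BipartiteOff (G : Multigraph V E) (X : Finset E) : Prop :=
  ∃ c : V → Bool, ∀ e ∉ X, ∀ u v, G.ends e = s(u, v) → c u ≠ c v

/-- `G` is bipartite. -/
def Bipartite (G : Multigraph V E) : Prop := G.BipartiteOff ∅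

/-- `X` is an `r`-minimal set: some signature `σ` with `N_σ = X` has circular flow
number `r`, while no signature whose negative edge set is a proper subset of `X`
has circular flow number `r`. -/
def IsRMinimal (G : Multigraph V E) (r : ℝ) (X : Finset E) : Prop :=
  (∃ σ, G.negEdges σ = X ∧ G.FlowAdmissible σ ∧ G.Fc σ = r) ∧
  ∀ σ, G.negEdges σ ⊂ X → ¬ (G.FlowAdmissible σ ∧ G.Fc σ = r)

/-- `X` is an `r`-minimal set of minimum cardinality. -/
def IsSmallestRMinimal (G : Multigraph V E) (r : ℝ) (X : Finset E) : Prop :=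
  G.IsRMinimal r X ∧ ∀ Y, G.IsRMinimal r Y → X.card ≤ Y.card


/-- `u` and `v` are joined by an edge belonging to the edge set `F`. -/
def AdjOn (G : Multigraph V E) (F : Finset E) (u v : V) : Prop :=
  ∃ e ∈ F, G.ends e = s(u, v)

/-- `u` and `v` are connected in the spanning subgraph with edge set `F`. -/
def ReachOn (G : Multigraph V E) (F : Finset E) : V → V → Prop :=
  Relation.ReflTransGen (G.AdjOn F)

/-- The connected component of `v` in the spanning subgraph with edge set `F`. -/
def componentOn (G : Multigraph V E) (F : Finset E) (v : V) : Set V :=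
  {u | G.ReachOn F v u}

/-- The number of connected components of odd cardinality of the spanning subgraph
with edge set `F`.  For a `2`-factor `F` these components are precisely the odd
circuits of the `2`-factor. -/
noncomputable def numOddComponents (G : Multigraph V E) (F : Finset E) : ℕ :=
  Nat.card {S : Set V // (∃ v, S = G.componentOn F v) ∧ Odd (Nat.card S)}

/-- The oddness `ω(G)`: the minimum number of odd circuits in a `2`-factor of `G`. -/
noncomputable def oddness (G : Multigraph V E) : ℕ :=
  sInf {k | ∃ F, G.IsFactor 2 F ∧ G.numOddComponents F = k}

/-- `e` is a bridge: its endpoints are disconnected after deleting `e`. -/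
def IsBridge (G : Multigraph V E) (e : E) : Prop :=
  ∀ u v, G.ends e = s(u, v) → ¬ G.ReachOn (Finset.univ.erase e) u v

/-- `G` has no bridge. -/
def Bridgeless (G : Multigraph V E) : Prop := ∀ e, ¬ G.IsBridge e

/-- `c` is a proper edge coloring: edges sharing an endpoint get distinct colors. -/
def IsProperEdgeColoring (G : Multigraph V E) {k : ℕ} (c : E → Fin k) : Prop :=
  ∀ e₁ e₂, e₁ ≠ e₂ → (∃ v, G.Inc v e₁ ∧ G.Inc v e₂) → c e₁ ≠ c e₂

/-- `G` is 3-edge-colorable. -/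
def ThreeEdgeColorable (G : Multigraph V E) : Prop :=
  ∃ c : E → Fin 3, G.IsProperEdgeColoring c

/-- The resistance `r(G)`: the minimum cardinality of a color class, over all proper
4-edge-colorings of `G`. -/
noncomputable def resistance (G : Multigraph V E) : ℕ :=
  sInf {k | ∃ c : E → Fin 4, G.IsProperEdgeColoring c ∧
    ∃ i : Fin 4, (Finset.univ.filter fun e => c e = i).card = k}

/-- Since our multigraphs are loopless, `G` is (isomorphic to) `K₂³` — the cubic graph
on two vertices joined by three parallel edges — iff it has exactly two vertices
and three edges. -/
def IsK23 (G : Multigraph V E) : Prop :=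
  Fintype.card V = 2 ∧ Fintype.card E = 3

/-- `S` is an independent set of vertices (no edge joins two of its members). -/
def IsIndepSet (G : Multigraph V E) (S : Finset V) : Prop :=
  ∀ u ∈ S, ∀ v ∈ S, ∀ e : E, G.ends e ≠ s(u, v)

/-- The independence number `α(G)`. -/
noncomputable def indepNum (G : Multigraph V E) : ℕ :=
  sSup {k | ∃ S : Finset V, G.IsIndepSet S ∧ S.card = k}

/-- The maximum degree `Δ(G[X])` of the subgraph of `G` induced by the edge set `X`. -/
def maxDegreeOn (G : Multigraph V E) (X : Finset E) : ℕ :=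
  Finset.univ.sup fun v => (G.incEdges v ∩ X).card

/-- A circuit of `G` of length `n + 1`: pairwise distinct vertices `v_0, …, v_n` and
pairwise distinct edges `e_0, …, e_n` with `e_i` joining `v_i` and `v_{i+1}`
(indices mod `n + 1`). -/
structure Circuit (G : Multigraph V E) where
  n : ℕ
  vert : Fin (n + 1) → V
  edge : Fin (n + 1) → E
  vert_inj : Function.Injective vert
  edge_inj : Function.Injective edge
  ends_eq : ∀ i, G.ends (edge i) = s(vert i, vert (i + 1))

/-- The number of negative edges on a circuit. -/
def Circuit.negCount {G : Multigraph V E} (σ : E → ℤˣ) (C : G.Circuit) : ℕ :=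
  (Finset.univ.filter fun i => σ (C.edge i) = -1).card

/-- The subgraph of `(G, σ)` with edge set `F` is balanced: every circuit using only
edges of `F` contains an even number of negative edges. -/
def BalancedOn (G : Multigraph V E) (σ : E → ℤˣ) (F : Finset E) : Prop :=
  ∀ C : G.Circuit, (∀ i, C.edge i ∈ F) → Even (C.negCount σ)

end Multigraph

open Multigraph

set_option linter.unusedVariables false
set_option linter.unusedSectionVars false
section Aux
open Multigraph Finset
variable {V E : Type} [Fintype V] [Fintype E] [DecidableEq V] [DecidableEq E] (G : Multigraph V E)

lemma sym2_eq {α : Type*} (z : Sym2 α) : ∃ a b, z = s(a, b) := by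
  induction z using Sym2.ind with
  | _ a b => exact ⟨a, b, rfl⟩

lemma ends_exists (e : E) : ∃ a b : V, a ≠ b ∧ G.ends e = s(a, b) := by
  have hnl := G.not_loop e
  obtain ⟨a, b, h⟩ := sym2_eq (G.ends e)
  refine ⟨a, b, ?_, h⟩
  rintro rfl
  rw [h] at hnl
  simp at hnl

lemma sum_inc_inter_card (T : Finset V) (A : Finset E) :
    ∑ v ∈ T, (G.incEdges v ∩ A).card = ∑ e ∈ A, (T.filter fun v => G.Inc v e).card := by
  have h1 : ∀ v, G.incEdges v ∩ A = A.filter fun e => G.Inc v e := by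
    intro v; ext e
    simp [Multigraph.incEdges, Finset.mem_filter, Finset.mem_inter, and_comm]
  simp only [h1, Finset.card_filter]
  exact Finset.sum_comm

lemma filter_inc_card (T : Finset V) (e : E) {a b : V} (hab : a ≠ b)
    (h : G.ends e = s(a, b)) :
    (T.filter fun v => G.Inc v e).card
      = (if a ∈ T then 1 else 0) + (if b ∈ T then 1 else 0) := by
  have hset : T.filter (fun v => G.Inc v e)
      = (T.filter (· = a)) ∪ (T.filter (· = b)) := by
    ext v
    simp only [Finset.mem_filter, Finset.mem_union, Multigraph.Inc, h, Sym2.mem_iff]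
    tauto
  have hdisj : Disjoint (T.filter (· = a)) (T.filter (· = b)) := by
    simp only [Finset.disjoint_left, Finset.mem_filter]
    rintro x ⟨-, rfl⟩ ⟨-, rfl⟩
    exact hab rfl
  rw [hset, Finset.card_union_of_disjoint hdisj, Finset.filter_eq', Finset.filter_eq']
  split <;> split <;> simp

end Aux
section Aux2
open Finset
variable {E : Type} [DecidableEq E]

lemma key1 {t : ℕ} (ht : 1 ≤ t) (f : E → ℝ) (r : ℝ) (A B : Finset E)
    (hc : A.card + B.card = 2 * t + 1) (hab : A.card ≤ B.card)
    (hs : ∑ e ∈ A, |f e| = ∑ e ∈ B, |f e|)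
    (h1 : ∀ e ∈ A ∪ B, 1 ≤ |f e|)
    (h2 : ∀ e ∈ A ∪ B, |f e| ≤ r - 1) :
    2 + 1 / (t : ℝ) ≤ r := by
  have hT : (1 : ℝ) ≤ (t : ℝ) := by exact_mod_cast ht
  have hT0 : (0 : ℝ) < (t : ℝ) := by linarith
  have ha : A.card ≤ t := by omega
  have hb : t + 1 ≤ B.card := by omega
  have hBsum : (B.card : ℝ) ≤ ∑ e ∈ B, |f e| := by
    have := Finset.card_nsmul_le_sum B (fun e => |f e|) 1
      (fun e he => h1 e (Finset.mem_union_right _ he))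
    simpa using this
  have hAsum : ∑ e ∈ A, |f e| ≤ (A.card : ℝ) * (r - 1) := by
    have := Finset.sum_le_card_nsmul A (fun e => |f e|) (r - 1)
      (fun e he => h2 e (Finset.mem_union_left _ he))
    simpa [nsmul_eq_mul] using this
  have hAne : A.Nonempty := by
    rcases Finset.eq_empty_or_nonempty A with h | h
    · exfalso
      have h0 : ∑ e ∈ A, |f e| = 0 := by simp [h]
      have hB0 : ∑ e ∈ B, |f e| = 0 := by rw [← hs, h]; simp
      rw [hB0] at hBsum
      have : (t : ℝ) + 1 ≤ (B.card : ℝ) := by exact_mod_cast hb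
      linarith
    · exact h
  obtain ⟨e0, he0⟩ := hAne
  have hr1 : (1 : ℝ) ≤ r - 1 :=
    le_trans (h1 e0 (Finset.mem_union_left _ he0)) (h2 e0 (Finset.mem_union_left _ he0))
  have hcast : (A.card : ℝ) ≤ (t : ℝ) := by exact_mod_cast ha
  have hbc : (t : ℝ) + 1 ≤ (B.card : ℝ) := by exact_mod_cast hb
  have hmain : (t : ℝ) + 1 ≤ (t : ℝ) * (r - 1) := by
    calc (t : ℝ) + 1 ≤ (B.card : ℝ) := hbc
    _ ≤ ∑ e ∈ B, |f e| := hBsum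
    _ = ∑ e ∈ A, |f e| := hs.symm
    _ ≤ (A.card : ℝ) * (r - 1) := hAsum
    _ ≤ (t : ℝ) * (r - 1) := by
        apply mul_le_mul_of_nonneg_right hcast; linarith
  have hmul : (2 + 1 / (t : ℝ)) * (t : ℝ) ≤ r * (t : ℝ) := by
    have h1t : (1 / (t : ℝ)) * (t : ℝ) = 1 := by field_simp
    nlinarith [hmain]
  exact le_of_mul_le_mul_right hmul hT0

lemma key2 {t : ℕ} (ht : 1 ≤ t) (f : E → ℝ) (A B : Finset E)
    (hc : A.card + B.card = 2 * t + 1) (hab : A.card ≤ B.card)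
    (hs : ∑ e ∈ A, |f e| = ∑ e ∈ B, |f e|)
    (h1 : ∀ e ∈ A ∪ B, 1 ≤ |f e|)
    (h2 : ∀ e ∈ A ∪ B, |f e| ≤ 1 + 1 / (t : ℝ) + 1 / (2 * (t : ℝ) ^ 2)) :
    A.card = t ∧ (∀ e ∈ A, 1 + 1 / (2 * (t : ℝ)) < |f e|)
      ∧ (∀ e ∈ B, |f e| ≤ 1 + 1 / (2 * (t : ℝ))) := by
  have hT : (1 : ℝ) ≤ (t : ℝ) := by exact_mod_cast ht
  have hT0 : (0 : ℝ) < (t : ℝ) := by linarith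
  set T : ℝ := (t : ℝ) with hTdef
  set u : ℝ := 1 / T with hudef
  have hu0 : 0 < u := by positivity
  have hu1 : u ≤ 1 := by rw [hudef]; rw [div_le_one hT0]; exact hT
  have htu : T * u = 1 := by rw [hudef]; field_simp
  have htu2 : T * (u * u) = u := by rw [← mul_assoc, htu, one_mul]
  have hr' : 1 + 1 / T + 1 / (2 * T ^ 2) = 1 + u + u * u / 2 := by
    rw [hudef]; field_simp
  have hθ : 1 + 1 / (2 * T) = 1 + u / 2 := by rw [hudef]; field_simp
  have hexp : (T - 1) * (1 + u + u * u / 2) = T - u / 2 - u * u / 2 := by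
    linear_combination htu + htu2 / 2
  have hexp2 : T * (1 + u + u * u / 2) = T + 1 + u / 2 := by
    linear_combination htu + htu2 / 2
  rw [hr'] at h2
  rw [hθ]
  -- basic sum bounds
  have hBsum : (B.card : ℝ) ≤ ∑ e ∈ B, |f e| := by
    have := Finset.card_nsmul_le_sum B (fun e => |f e|) 1
      (fun e he => h1 e (Finset.mem_union_right _ he))
    simpa using this
  have hASum : ∑ e ∈ A, |f e| ≤ (A.card : ℝ) * (1 + u + u * u / 2) := by
    have := Finset.sum_le_card_nsmul A (fun e => |f e|) (1 + u + u * u / 2)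
      (fun e he => h2 e (Finset.mem_union_left _ he))
    rwa [nsmul_eq_mul] at this
  have halet : A.card ≤ t := by omega
  -- step 1 : A.card = t
  have hAcard : A.card = t := by
    by_contra hne
    have ha1 : A.card + 1 ≤ t := by omega
    have hb2 : t + 2 ≤ B.card := by omega
    have hcA : (A.card : ℝ) ≤ T - 1 := by
      have : ((A.card : ℕ) : ℝ) + 1 ≤ (t : ℝ) := by exact_mod_cast ha1
      linarith
    have hcB : T + 2 ≤ (B.card : ℝ) := by
      have : ((t : ℕ) : ℝ) + 2 ≤ (B.card : ℝ) := by exact_mod_cast hb2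
      linarith
    have hchain : T + 2 ≤ (T - 1) * (1 + u + u * u / 2) := by
      calc T + 2 ≤ (B.card : ℝ) := hcB
      _ ≤ ∑ e ∈ B, |f e| := hBsum
      _ = ∑ e ∈ A, |f e| := hs.symm
      _ ≤ (A.card : ℝ) * (1 + u + u * u / 2) := hASum
      _ ≤ (T - 1) * (1 + u + u * u / 2) := by
          apply mul_le_mul_of_nonneg_right hcA; positivity
    rw [hexp] at hchain
    nlinarith [mul_pos hu0 hu0]
  have hBcard : B.card = t + 1 := by omega
  have hSumA_le : ∑ e ∈ A, |f e| ≤ T + 1 + u / 2 := by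
    have h' : (A.card : ℝ) = T := by rw [hAcard]
    rw [h', hexp2] at hASum
    exact hASum
  have hSumB_ge : T + 1 ≤ ∑ e ∈ B, |f e| := by
    have h' : (B.card : ℝ) = T + 1 := by rw [hBcard]; push_cast; ring
    rw [h'] at hBsum
    exact hBsum
  refine ⟨hAcard, ?_, ?_⟩
  · -- e ∈ A : large values
    intro e he
    have herase : ∑ x ∈ A.erase e, |f x| ≤ ((A.erase e).card : ℝ) * (1 + u + u * u / 2) := by
      have := Finset.sum_le_card_nsmul (A.erase e) (fun x => |f x|) (1 + u + u * u / 2)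
        (fun x hx => h2 x (Finset.mem_union_left _ (Finset.mem_of_mem_erase hx)))
      rwa [nsmul_eq_mul] at this
    have hcard_erase : ((A.erase e).card : ℝ) = T - 1 := by
      rw [Finset.card_erase_of_mem he, hAcard]
      have : (1:ℕ) ≤ t := ht
      push_cast [Nat.cast_sub this]
      ring
    have hsplit : |f e| + ∑ x ∈ A.erase e, |f x| = ∑ x ∈ A, |f x| :=
      Finset.add_sum_erase A (fun x => |f x|) he
    rw [hcard_erase, hexp] at herase
    linarith [mul_pos hu0 hu0, hs, hSumB_ge, hsplit]
  · -- e ∈ B : small values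
    intro e he
    have herase : ((B.erase e).card : ℝ) ≤ ∑ x ∈ B.erase e, |f x| := by
      have := Finset.card_nsmul_le_sum (B.erase e) (fun x => |f x|) 1
        (fun x hx => h1 x (Finset.mem_union_right _ (Finset.mem_of_mem_erase hx)))
      simpa using this
    have hcard_erase : ((B.erase e).card : ℝ) = T := by
      rw [Finset.card_erase_of_mem he, hBcard]; simp; exact hTdef.symm
    rw [hcard_erase] at herase
    have hsplit : |f e| + ∑ x ∈ B.erase e, |f x| = ∑ x ∈ B, |f x| :=
      Finset.add_sum_erase B (fun x => |f x|) he
    linarith [hSumA_le, hs]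

end Aux2
section Aux3
open Multigraph Finset
variable {V E : Type} [Fintype V] [Fintype E] [DecidableEq V] [DecidableEq E] (G : Multigraph V E)

lemma units_abs_one (w : ℤˣ) : |((w : ℤ) : ℝ)| = 1 := by
  rcases Int.units_eq_one_or w with h | h <;> rw [h] <;> norm_num

lemma vertex_split (τ : E → V → ℤˣ) (f : E → ℝ) (v : V)
    (hbd : G.boundary τ f v = 0) (hnz : ∀ e, 1 ≤ |f e|) :
    ∃ P N : Finset E, Disjoint P N ∧ P ∪ N = G.incEdges v ∧
      ∑ e ∈ P, |f e| = ∑ e ∈ N, |f e| := by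
  classical
  set g : E → ℝ := fun e => (((τ e v : ℤˣ) : ℤ) : ℝ) * f e with hg
  have habs : ∀ e, |g e| = |f e| := by
    intro e; rw [hg]; simp only [abs_mul, units_abs_one, one_mul]
  refine ⟨(G.incEdges v).filter (fun e => 0 < g e),
    (G.incEdges v).filter (fun e => ¬ 0 < g e),
    Finset.disjoint_filter_filter_not _ _ _,
    Finset.filter_union_filter_not_eq _ _, ?_⟩
  have hsum : ∑ e ∈ (G.incEdges v).filter (fun e => 0 < g e), g e
      + ∑ e ∈ (G.incEdges v).filter (fun e => ¬ 0 < g e), g e = 0 := by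
    rw [Finset.sum_filter_add_sum_filter_not]
    exact hbd
  have hP : ∑ e ∈ (G.incEdges v).filter (fun e => 0 < g e), g e
      = ∑ e ∈ (G.incEdges v).filter (fun e => 0 < g e), |f e| := by
    apply Finset.sum_congr rfl
    intro e he
    rw [← habs e, abs_of_pos (Finset.mem_filter.mp he).2]
  have hN : ∑ e ∈ (G.incEdges v).filter (fun e => ¬ 0 < g e), g e
      = - ∑ e ∈ (G.incEdges v).filter (fun e => ¬ 0 < g e), |f e| := by
    rw [← Finset.sum_neg_distrib]
    apply Finset.sum_congr rfl
    intro e he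
    have hle : g e ≤ 0 := le_of_not_gt (Finset.mem_filter.mp he).2
    rw [← habs e, abs_of_nonpos hle, neg_neg]
  rw [hP, hN] at hsum
  linarith

lemma Fc_eq (σ : E → ℤˣ) (r0 : ℝ) (h2 : 2 ≤ r0) (hflow : G.HasNZFlow σ r0)
    (hlow : ∀ r, 2 ≤ r → G.HasNZFlow σ r → r0 ≤ r) : G.Fc σ = r0 := by
  apply le_antisymm
  · exact csInf_le ⟨r0, fun x hx => hlow x hx.1 hx.2⟩ ⟨h2, hflow⟩
  · exact le_csInf ⟨r0, h2, hflow⟩ fun r hr => hlow r hr.1 hr.2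

lemma HasNZFlow_mono (σ : E → ℤˣ) {r s : ℝ} (hrs : r ≤ s) (h : G.HasNZFlow σ r) :
    G.HasNZFlow σ s := by
  obtain ⟨f, τ, hτ, hbd, hb⟩ := h
  exact ⟨f, τ, hτ, hbd, fun e => ⟨(hb e).1, le_trans (hb e).2 (by linarith)⟩⟩

lemma exists_flow_above (σ : E → ℤˣ) (hadm : G.FlowAdmissible σ) {r : ℝ}
    (hr : G.Fc σ < r) : G.HasNZFlow σ r := by
  obtain ⟨r1, h2, hf⟩ := hadm
  have hne : {r : ℝ | 2 ≤ r ∧ G.HasNZFlow σ r}.Nonempty := ⟨r1, h2, hf⟩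
  obtain ⟨s, hs, hsr⟩ := exists_lt_of_csInf_lt hne hr
  exact HasNZFlow_mono G σ (le_of_lt hsr) hs.2

lemma flow_lb {t : ℕ} (ht : 1 ≤ t) (hreg : G.IsRegular (2 * t + 1)) (v0 : V)
    (σ : E → ℤˣ) (r : ℝ) (hflow : G.HasNZFlow σ r) : 2 + 1 / (t : ℝ) ≤ r := by
  obtain ⟨f, τ, hτ, hbd, hb⟩ := hflow
  obtain ⟨P, N, hd, hu, hs⟩ := vertex_split G τ f v0 (hbd v0) (fun e => (hb e).1)
  have hcard : P.card + N.card = 2 * t + 1 := by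
    rw [← Finset.card_union_of_disjoint hd, hu]
    exact hreg v0
  rcases le_total P.card N.card with hab | hab
  · exact key1 ht f r P N hcard hab hs (fun e _ => (hb e).1) (fun e _ => (hb e).2)
  · refine key1 ht f r N P (by omega) hab hs.symm ?_ ?_ <;>
      exact fun e _ => by first | exact (hb e).1 | exact (hb e).2

lemma exists_tfactor {t : ℕ} (ht : 1 ≤ t) (hreg : G.IsRegular (2 * t + 1))
    (σ : E → ℤˣ) (hadm : G.FlowAdmissible σ) (hFc : G.Fc σ = 2 + 1 / (t : ℝ)) :
    ∃ F : Finset E, G.IsFactor t F := by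
  classical
  have hT : (1 : ℝ) ≤ (t : ℝ) := by exact_mod_cast ht
  have hT0 : (0 : ℝ) < (t : ℝ) := by linarith
  set r : ℝ := 2 + 1 / (t : ℝ) + 1 / (2 * (t : ℝ) ^ 2) with hrdef
  have hflow : G.HasNZFlow σ r := by
    apply exists_flow_above G σ hadm
    rw [hFc, hrdef]
    have : 0 < 1 / (2 * (t : ℝ) ^ 2) := by positivity
    linarith
  obtain ⟨f, τ, hτ, hbd, hb⟩ := hflow
  refine ⟨Finset.univ.filter (fun e => 1 + 1 / (2 * (t : ℝ)) < |f e|), ?_⟩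
  intro v
  have hinter : G.incEdges v ∩ Finset.univ.filter (fun e => 1 + 1 / (2 * (t : ℝ)) < |f e|)
      = (G.incEdges v).filter (fun e => 1 + 1 / (2 * (t : ℝ)) < |f e|) := by
    ext e; simp [Finset.mem_inter, Finset.mem_filter]
  rw [hinter]
  obtain ⟨P, N, hd, hu, hs⟩ := vertex_split G τ f v (hbd v) (fun e => (hb e).1)
  have hcard : P.card + N.card = 2 * t + 1 := by
    rw [← Finset.card_union_of_disjoint hd, hu]
    exact hreg v
  have hbr : ∀ e, |f e| ≤ 1 + 1 / (t : ℝ) + 1 / (2 * (t : ℝ) ^ 2) := by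
    intro e
    have := (hb e).2
    rw [hrdef] at this
    linarith
  have main : ∀ A B : Finset E, Disjoint A B → A ∪ B = G.incEdges v →
      A.card + B.card = 2 * t + 1 → A.card ≤ B.card →
      (∑ e ∈ A, |f e| = ∑ e ∈ B, |f e|) →
      (G.incEdges v).filter (fun e => 1 + 1 / (2 * (t : ℝ)) < |f e|) = A ∧ A.card = t := by
    intro A B hd hu hcard hab hs
    obtain ⟨hAcard, hA, hB⟩ := key2 ht f A B hcard hab hs
      (fun e _ => (hb e).1) (fun e _ => hbr e)
    constructor
    · ext e
      rw [← hu]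
      simp only [Finset.mem_filter, Finset.mem_union]
      constructor
      · rintro ⟨hA' | hB', hp⟩
        · exact hA'
        · exact absurd hp (not_lt.mpr (hB e hB'))
      · intro he
        exact ⟨Or.inl he, hA e he⟩
    · exact hAcard
  rcases le_total P.card N.card with hab | hab
  · obtain ⟨h1, h2⟩ := main P N hd hu hcard hab hs
    rw [h1]; exact h2
  · obtain ⟨h1, h2⟩ := main N P hd.symm (by rw [Finset.union_comm]; exact hu)
      (by omega) hab hs.symm
    rw [h1]; exact h2

end Aux3
section Aux4
open Multigraph Finset
variable {V E : Type} [Fintype V] [Fintype E] [DecidableEq V] [DecidableEq E] (G : Multigraph V E)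

/-- The set of monochromatic edges of the coloring `c`. -/
def XC (c : V → Bool) : Finset E :=
  Finset.univ.filter fun e => ((G.ends e).map c).IsDiag

/-- The signature whose negative edges are the monochromatic edges of `c`. -/
def sigC (c : V → Bool) : E → ℤˣ :=
  fun e => if ((G.ends e).map c).IsDiag then -1 else 1

lemma negEdges_sigC (c : V → Bool) : G.negEdges (sigC G c) = XC G c := by
  ext e
  simp only [Multigraph.negEdges, XC, sigC, Finset.mem_filter, Finset.mem_univ, true_and]
  by_cases hd : ((G.ends e).map c).IsDiag
  · simp [hd]
  · simp only [if_neg hd, hd, iff_false]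
    simp [hd]

lemma mem_XC_iff (c : V → Bool) (e : E) {a b : V} (h : G.ends e = s(a, b)) :
    e ∈ XC G c ↔ c a = c b := by
  simp only [XC, Finset.mem_filter, Finset.mem_univ, true_and, h, Sym2.map_pair_eq,
    Sym2.mk_isDiag_iff]

lemma Fc_colored {t : ℕ} (ht : 1 ≤ t) (hreg : G.IsRegular (2 * t + 1)) (v0 : V)
    (F : Finset E) (hF : G.IsFactor t F) (c : V → Bool) :
    G.FlowAdmissible (sigC G c) ∧ G.Fc (sigC G c) = 2 + 1 / (t : ℝ) := by
  classical
  have hT : (1 : ℝ) ≤ (t : ℝ) := by exact_mod_cast ht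
  have hT0 : (0 : ℝ) < (t : ℝ) := by linarith
  set ε : V → ℤˣ := fun v => if c v then 1 else -1 with hε
  set τ : E → V → ℤˣ := fun e w => if e ∈ F then -(ε w) else ε w with hτdef
  set f : E → ℝ := fun e => if e ∈ F then 1 + 1 / (t : ℝ) else 1 with hfdef
  have horient : G.IsOrientation (sigC G c) τ := by
    intro e a b heq
    have hprod : τ e a * τ e b = ε a * ε b := by
      rw [hτdef]
      by_cases hF' : e ∈ F <;> simp [hF']
    rw [hprod]
    simp only [sigC, heq, Sym2.map_pair_eq, Sym2.mk_isDiag_iff]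
    by_cases h1 : c a <;> by_cases h2 : c b <;> simp [hε, h1, h2] <;> try decide
  have hbound : ∀ v, G.boundary τ f v = 0 := by
    intro v
    have hterm : ∀ e, (((τ e v : ℤˣ) : ℤ) : ℝ) * f e
        = if e ∈ F then -(((ε v : ℤˣ) : ℤ) : ℝ) * (1 + 1 / (t : ℝ))
          else (((ε v : ℤˣ) : ℤ) : ℝ) := by
      intro e
      rw [hτdef, hfdef]
      by_cases hF' : e ∈ F <;> simp [hF']
    have hcF : ((G.incEdges v).filter (fun e => e ∈ F)).card = t := by
      have heq2 : (G.incEdges v).filter (fun e => e ∈ F) = G.incEdges v ∩ F := by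
        ext e; simp [Finset.mem_inter, Finset.mem_filter]
      rw [heq2, hF v]
    have hcNF : ((G.incEdges v).filter (fun e => ¬ e ∈ F)).card = t + 1 := by
      have := Finset.card_filter_add_card_filter_not (s := G.incEdges v)
        (fun e => e ∈ F)
      have hdeg := hreg v
      rw [Multigraph.degree] at hdeg
      omega
    rw [Multigraph.boundary]
    calc ∑ e ∈ G.incEdges v, (((τ e v : ℤˣ) : ℤ) : ℝ) * f e
        = ∑ e ∈ G.incEdges v, (if e ∈ F then -(((ε v : ℤˣ) : ℤ) : ℝ) * (1 + 1 / (t : ℝ))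
            else (((ε v : ℤˣ) : ℤ) : ℝ)) := Finset.sum_congr rfl (fun e _ => hterm e)
      _ = ((G.incEdges v).filter (fun e => e ∈ F)).card
            • (-(((ε v : ℤˣ) : ℤ) : ℝ) * (1 + 1 / (t : ℝ)))
          + ((G.incEdges v).filter (fun e => ¬ e ∈ F)).card • ((((ε v : ℤˣ) : ℤ) : ℝ)) := by
          rw [Finset.sum_ite]
          simp [Finset.sum_const]
      _ = 0 := by
          rw [hcF, hcNF]
          push_cast
          field_simp [hT0.ne']
          have htt : (t : ℝ) * (t : ℝ)⁻¹ = 1 := mul_inv_cancel₀ hT0.ne'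
          linear_combination (-((((ε v : ℤˣ) : ℤ) : ℝ)) - (((ε v : ℤˣ) : ℤ) : ℝ) * (t : ℝ)) * htt
  have hflow : G.HasNZFlow (sigC G c) (2 + 1 / (t : ℝ)) := by
    refine ⟨f, τ, horient, hbound, ?_⟩
    intro e
    have h1t : 0 < (t : ℝ)⁻¹ := by positivity
    have h1t' : (1 : ℝ) / (t : ℝ) = (t : ℝ)⁻¹ := one_div _
    simp only [hfdef]
    by_cases hF' : e ∈ F
    · rw [if_pos hF', abs_of_pos (by rw [h1t']; linarith)]
      rw [h1t']
      exact ⟨by linarith, by linarith⟩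
    · rw [if_neg hF', abs_one, h1t']
      exact ⟨le_refl 1, by linarith⟩
  have h2r : (2 : ℝ) ≤ 2 + 1 / (t : ℝ) := by
    have : 0 < 1 / (t : ℝ) := by positivity
    linarith
  refine ⟨⟨2 + 1 / (t : ℝ), h2r, hflow⟩, ?_⟩
  exact Fc_eq G (sigC G c) _ h2r hflow
    (fun r _ hfl => flow_lb G ht hreg v0 (sigC G c) r hfl)

end Aux4
section Aux5
open Multigraph Finset
variable {V E : Type} [Fintype V] [Fintype E] [DecidableEq V] [DecidableEq E] (G : Multigraph V E)

lemma card_le_of_sig (r0 : ℝ) (X : Finset E) (hX : G.IsSmallestRMinimal r0 X)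
    (Z : Finset E) (σz : E → ℤˣ) (hz : G.negEdges σz = Z)
    (hadm : G.FlowAdmissible σz) (hFc : G.Fc σz = r0) : X.card ≤ Z.card := by
  classical
  set P : Finset E → Prop :=
    fun Y => ∃ σ : E → ℤˣ, G.negEdges σ = Y ∧ G.FlowAdmissible σ ∧ G.Fc σ = r0 with hP
  have hZP : Z ∈ Z.powerset.filter P :=
    Finset.mem_filter.mpr ⟨Finset.mem_powerset_self Z, σz, hz, hadm, hFc⟩
  obtain ⟨Y, hYmem, hYmin⟩ := Finset.exists_min_image (Z.powerset.filter P)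
    Finset.card ⟨Z, hZP⟩
  obtain ⟨hYsub, σy, hy1, hy2, hy3⟩ := Finset.mem_filter.mp hYmem
  have hYminimal : G.IsRMinimal r0 Y := by
    refine ⟨⟨σy, hy1, hy2, hy3⟩, ?_⟩
    rintro σ' hsub ⟨hadm', hFc'⟩
    have hmem' : G.negEdges σ' ∈ Z.powerset.filter P :=
      Finset.mem_filter.mpr ⟨Finset.mem_powerset.mpr
        (hsub.subset.trans (Finset.mem_powerset.mp hYsub)), σ', rfl, hadm', hFc'⟩
    have := hYmin _ hmem'
    have hlt := Finset.card_lt_card hsub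
    omega
  calc X.card ≤ Y.card := hX.2 Y hYminimal
    _ ≤ Z.card := Finset.card_le_card (Finset.mem_powerset.mp hYsub)

lemma indep_bound {t : ℕ} (hreg : G.IsRegular (2 * t + 1)) (S : Finset V)
    (hS : G.IsIndepSet S) :
    2 * (XC G (fun v => decide (v ∈ S))).card + 2 * (S.card * (2 * t + 1))
      ≤ Fintype.card V * (2 * t + 1) := by
  classical
  set c : V → Bool := fun v => decide (v ∈ S) with hc
  set Touch : Finset E := Finset.univ.filter (fun e => ∃ u ∈ S, G.Inc u e) with hTouch
  -- each monochromatic edge has both endpoints outside S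
  have hmono : ∀ e ∈ XC G c, ∀ a b : V, G.ends e = s(a, b) → a ∉ S ∧ b ∉ S := by
    intro e he a b hab
    have hiff : (a ∈ S) ↔ (b ∈ S) := by
      have := (mem_XC_iff G c e hab).mp he
      simpa [hc, decide_eq_decide] using this
    by_cases haS : a ∈ S
    · exact absurd hab (hS a haS b (hiff.mp haS) e)
    · exact ⟨haS, fun hbS => haS (hiff.mpr hbS)⟩
  -- each touching edge has exactly one endpoint in S
  have htouch : ∀ e ∈ Touch, ∀ a b : V, G.ends e = s(a, b) →
      (a ∈ S ∧ b ∉ S) ∨ (b ∈ S ∧ a ∉ S) := by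
    intro e he a b hab
    obtain ⟨u, huS, hu⟩ := (Finset.mem_filter.mp he).2
    have hu' : u = a ∨ u = b := by
      rw [Multigraph.Inc, hab, Sym2.mem_iff] at hu
      exact hu
    have hnot : ¬ (a ∈ S ∧ b ∈ S) := by
      rintro ⟨ha, hbb⟩
      exact hS a ha b hbb e hab
    rcases hu' with rfl | rfl
    · exact Or.inl ⟨huS, fun hb => hnot ⟨huS, hb⟩⟩
    · exact Or.inr ⟨huS, fun ha => hnot ⟨ha, huS⟩⟩
  -- disjointness at each vertex outside S
  have hdisj : ∀ v, Disjoint (G.incEdges v ∩ XC G c) (G.incEdges v ∩ Touch) := by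
    intro v
    simp only [Finset.disjoint_left, Finset.mem_inter]
    rintro e ⟨hev, heX⟩ ⟨-, heT⟩
    obtain ⟨a, b, hab, hends⟩ := ends_exists G e
    rcases htouch e heT a b hends with ⟨h1, -⟩ | ⟨h1, -⟩
    · exact (hmono e heX a b hends).1 h1
    · exact (hmono e heX a b hends).2 h1
  -- vertexwise bound
  have hvert : ∀ v, (G.incEdges v ∩ XC G c).card + (G.incEdges v ∩ Touch).card
      ≤ 2 * t + 1 := by
    intro v
    rw [← Finset.card_union_of_disjoint (hdisj v)]
    calc ((G.incEdges v ∩ XC G c) ∪ (G.incEdges v ∩ Touch)).card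
        ≤ (G.incEdges v).card := Finset.card_le_card (by
          intro e he
          rcases Finset.mem_union.mp he with h | h
          · exact (Finset.mem_inter.mp h).1
          · exact (Finset.mem_inter.mp h).1)
      _ = 2 * t + 1 := hreg v
  -- handshake for XC over Sᶜ
  have hXCsum : ∑ v ∈ Sᶜ, (G.incEdges v ∩ XC G c).card = 2 * (XC G c).card := by
    have hval : ∀ e ∈ XC G c, (Sᶜ.filter fun v0 => G.Inc v0 e).card = 2 := by
      intro e he
      obtain ⟨a, b, hab, hends⟩ := ends_exists G e
      obtain ⟨ha, hb⟩ := hmono e he a b hends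
      rw [filter_inc_card G Sᶜ e hab hends, if_pos (Finset.mem_compl.mpr ha),
        if_pos (Finset.mem_compl.mpr hb)]
    calc ∑ v ∈ Sᶜ, (G.incEdges v ∩ XC G c).card
        = ∑ e ∈ XC G c, (Sᶜ.filter fun v0 => G.Inc v0 e).card := sum_inc_inter_card G _ _
      _ = ∑ _e ∈ XC G c, 2 := Finset.sum_congr rfl hval
      _ = 2 * (XC G c).card := by rw [Finset.sum_const, smul_eq_mul, mul_comm]
  -- handshake for Touch over Sᶜ
  have hTsum : ∑ v ∈ Sᶜ, (G.incEdges v ∩ Touch).card = Touch.card := by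
    have hval : ∀ e ∈ Touch, (Sᶜ.filter fun v0 => G.Inc v0 e).card = 1 := by
      intro e he
      obtain ⟨a, b, hab, hends⟩ := ends_exists G e
      rcases htouch e he a b hends with ⟨h1, h2⟩ | ⟨h1, h2⟩ <;>
        rw [filter_inc_card G Sᶜ e hab hends] <;>
        simp [Finset.mem_compl, h1, h2]
    calc ∑ v ∈ Sᶜ, (G.incEdges v ∩ Touch).card
        = ∑ e ∈ Touch, (Sᶜ.filter fun v0 => G.Inc v0 e).card := sum_inc_inter_card G _ _
      _ = ∑ _e ∈ Touch, 1 := Finset.sum_congr rfl hval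
      _ = Touch.card := by rw [Finset.sum_const, smul_eq_mul, mul_one]
  -- Touch.card = S.card * (2t+1)
  have hTouchCard : Touch.card = S.card * (2 * t + 1) := by
    have h1 : ∑ v ∈ S, (G.incEdges v ∩ Touch).card = Touch.card := by
      have hval : ∀ e ∈ Touch, (S.filter fun v0 => G.Inc v0 e).card = 1 := by
        intro e he
        obtain ⟨a, b, hab, hends⟩ := ends_exists G e
        rcases htouch e he a b hends with ⟨h1, h2⟩ | ⟨h1, h2⟩ <;>
          rw [filter_inc_card G S e hab hends] <;> simp [h1, h2]
      calc ∑ v ∈ S, (G.incEdges v ∩ Touch).card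
          = ∑ e ∈ Touch, (S.filter fun v0 => G.Inc v0 e).card := sum_inc_inter_card G _ _
        _ = ∑ _e ∈ Touch, 1 := Finset.sum_congr rfl hval
        _ = Touch.card := by rw [Finset.sum_const, smul_eq_mul, mul_one]
    have h2 : ∀ v ∈ S, G.incEdges v ∩ Touch = G.incEdges v := by
      intro v hv
      apply Finset.inter_eq_left.mpr
      intro e he
      exact Finset.mem_filter.mpr ⟨Finset.mem_univ e, v, hv, (Finset.mem_filter.mp he).2⟩
    rw [← h1]
    calc ∑ v ∈ S, (G.incEdges v ∩ Touch).card
        = ∑ _v ∈ S, (2 * t + 1) :=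
          Finset.sum_congr rfl (fun v hv => by rw [h2 v hv]; exact hreg v)
      _ = S.card * (2 * t + 1) := by rw [Finset.sum_const, smul_eq_mul]
  -- combine
  have hsum : ∑ v ∈ Sᶜ, ((G.incEdges v ∩ XC G c).card + (G.incEdges v ∩ Touch).card)
      ≤ ∑ _v ∈ Sᶜ, (2 * t + 1) := Finset.sum_le_sum (fun v _ => hvert v)
  rw [Finset.sum_add_distrib, hXCsum, hTsum, Finset.sum_const, smul_eq_mul] at hsum
  have hcompl : S.card + Sᶜ.card = Fintype.card V := Finset.card_add_card_compl S
  have := hTouchCard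
  nlinarith [hsum, hcompl, hTouchCard]

end Aux5
section Aux6
open Multigraph Finset
variable {V E : Type} [Fintype V] [Fintype E] [DecidableEq V] [DecidableEq E] (G : Multigraph V E)

lemma inc_ends (e : E) (v : V) (h : G.Inc v e) : ∃ w, w ≠ v ∧ G.ends e = s(v, w) := by
  obtain ⟨a, b, hab, hends⟩ := ends_exists G e
  rw [Multigraph.Inc, hends, Sym2.mem_iff] at h
  rcases h with rfl | rfl
  · exact ⟨b, fun hw => hab hw.symm, hends⟩
  · exact ⟨a, fun hw => hab hw, by rw [hends, Sym2.eq_swap]⟩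

lemma maxcut_bound {t : ℕ} (hreg : G.IsRegular (2 * t + 1)) :
    ∃ c : V → Bool, 2 * (XC G c).card ≤ Fintype.card V * t := by
  classical
  obtain ⟨c0, -, hc0min⟩ := Finset.exists_min_image (Finset.univ : Finset (V → Bool))
    (fun c => (XC G c).card) ⟨fun _ => true, Finset.mem_univ _⟩
  refine ⟨c0, ?_⟩
  have hvert : ∀ v, (G.incEdges v ∩ XC G c0).card ≤ t := by
    intro v
    by_contra hcon
    push_neg at hcon
    set c' : V → Bool := Function.update c0 v (!(c0 v)) with hc'
    have hXC' : XC G c' = (XC G c0 \ G.incEdges v) ∪ (G.incEdges v \ XC G c0) := by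
      ext e
      by_cases hev : e ∈ G.incEdges v
      · have hinc : G.Inc v e := (Finset.mem_filter.mp hev).2
        obtain ⟨w, hwv, hends⟩ := inc_ends G e v hinc
        have h1 : e ∈ XC G c' ↔ c' v = c' w := mem_XC_iff G c' e hends
        have h2 : e ∈ XC G c0 ↔ c0 v = c0 w := mem_XC_iff G c0 e hends
        have hcv : c' v = !(c0 v) := Function.update_self v _ c0
        have hcw : c' w = c0 w := Function.update_of_ne hwv _ c0
        simp only [Finset.mem_union, Finset.mem_sdiff, hev, true_and, and_true,
          not_true, and_false, false_or]
        rw [h1, h2, hcv, hcw]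
        rcases Bool.eq_false_or_eq_true (c0 v) with hv0 | hv0 <;>
          rcases Bool.eq_false_or_eq_true (c0 w) with hw0 | hw0 <;>
          rw [hv0, hw0] <;> decide
      · obtain ⟨a, b, hab, hends⟩ := ends_exists G e
        have hva : a ≠ v := by
          rintro rfl
          exact hev (Finset.mem_filter.mpr ⟨Finset.mem_univ e,
            by rw [Multigraph.Inc, hends]; simp⟩)
        have hvb : b ≠ v := by
          rintro rfl
          exact hev (Finset.mem_filter.mpr ⟨Finset.mem_univ e,
            by rw [Multigraph.Inc, hends]; simp⟩)
        have h1 : e ∈ XC G c' ↔ c' a = c' b := mem_XC_iff G c' e hends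
        have h2 : e ∈ XC G c0 ↔ c0 a = c0 b := mem_XC_iff G c0 e hends
        have hca : c' a = c0 a := Function.update_of_ne hva _ c0
        have hcb : c' b = c0 b := Function.update_of_ne hvb _ c0
        simp only [Finset.mem_union, Finset.mem_sdiff, hev, not_false_iff, and_true,
          false_and, or_false]
        rw [h1, h2, hca, hcb]
      -- done
    have hdisj : Disjoint (XC G c0 \ G.incEdges v) (G.incEdges v \ XC G c0) := by
      simp only [Finset.disjoint_left, Finset.mem_sdiff]
      rintro e ⟨he1, he2⟩ ⟨he3, -⟩
      exact he2 he3
    have hcard' : (XC G c').card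
        = (XC G c0 \ G.incEdges v).card + (G.incEdges v \ XC G c0).card := by
      rw [hXC', Finset.card_union_of_disjoint hdisj]
    have e1 : (XC G c0 \ G.incEdges v).card + (XC G c0 ∩ G.incEdges v).card
        = (XC G c0).card := by
      rw [add_comm]; exact Finset.card_inter_add_card_sdiff _ _
    have e2 : (G.incEdges v \ XC G c0).card + (G.incEdges v ∩ XC G c0).card
        = 2 * t + 1 := by
      rw [add_comm, Finset.card_inter_add_card_sdiff]
      exact hreg v
    have e3 : (XC G c0 ∩ G.incEdges v).card = (G.incEdges v ∩ XC G c0).card := by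
      rw [Finset.inter_comm]
    have hmin := hc0min c' (Finset.mem_univ c')
    omega
  have htotal : ∑ v ∈ (Finset.univ : Finset V), (G.incEdges v ∩ XC G c0).card
      = 2 * (XC G c0).card := by
    have hval : ∀ e ∈ XC G c0,
        ((Finset.univ : Finset V).filter fun v0 => G.Inc v0 e).card = 2 := by
      intro e _
      obtain ⟨a, b, hab, hends⟩ := ends_exists G e
      rw [filter_inc_card G Finset.univ e hab hends, if_pos (Finset.mem_univ a),
        if_pos (Finset.mem_univ b)]
    calc ∑ v ∈ (Finset.univ : Finset V), (G.incEdges v ∩ XC G c0).card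
        = ∑ e ∈ XC G c0, ((Finset.univ : Finset V).filter fun v0 => G.Inc v0 e).card :=
          sum_inc_inter_card G _ _
      _ = ∑ _e ∈ XC G c0, 2 := Finset.sum_congr rfl hval
      _ = 2 * (XC G c0).card := by rw [Finset.sum_const, smul_eq_mul, mul_comm]
  have hbound : ∑ v ∈ (Finset.univ : Finset V), (G.incEdges v ∩ XC G c0).card
      ≤ Fintype.card V * t := by
    calc ∑ v ∈ (Finset.univ : Finset V), (G.incEdges v ∩ XC G c0).card
        ≤ ∑ _v ∈ (Finset.univ : Finset V), t := Finset.sum_le_sum (fun v _ => hvert v)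
      _ = Fintype.card V * t := by rw [Finset.sum_const, smul_eq_mul, Finset.card_univ]
  omega

end Aux6


/-- Let `t ≥ 1` and let `G` be a `(2t+1)`-regular graph.  If `X ⊆ E(G)` is a smallest
`(2 + 1/t)`-minimal set, then
`|X| ≤ min { (|V(G)|/2 - α(G))·(2t+1), (t/2)·|V(G)| }`. -/
theorem stmt16 {V E : Type} [Fintype V] [Fintype E] [DecidableEq V] [DecidableEq E]
    (t : ℕ) (ht : 1 ≤ t) (G : Multigraph V E) (hreg : G.IsRegular (2 * t + 1))
    (X : Finset E) (hX : G.IsSmallestRMinimal (2 + 1 / (t : ℝ)) X) :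
    (X.card : ℝ) ≤
      min (((Fintype.card V : ℝ) / 2 - G.indepNum) * (2 * t + 1))
        ((t : ℝ) / 2 * Fintype.card V) := by
  classical
  obtain ⟨σ0, hneg0, hadm0, hFc0⟩ := hX.1.1
  have hT : (1 : ℝ) ≤ (t : ℝ) := by exact_mod_cast ht
  have hT0 : (0 : ℝ) < (t : ℝ) := by linarith
  have h1t : 0 < 1 / (t : ℝ) := by positivity
  rcases isEmpty_or_nonempty V with hVe | hV
  · exfalso
    have hE : ∀ e : E, False := by
      intro e
      obtain ⟨a, b, -, -⟩ := ends_exists G e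
      exact hVe.false a
    have hflow2 : G.HasNZFlow σ0 2 :=
      ⟨fun _ => 1, fun _ _ => 1, fun e => (hE e).elim, fun v => (hVe.false v).elim,
        fun e => (hE e).elim⟩
    have h2 : G.Fc σ0 = 2 := Fc_eq G σ0 2 le_rfl hflow2 (fun r hr _ => hr)
    rw [hFc0] at h2
    linarith
  · obtain ⟨v0⟩ := hV
    obtain ⟨F, hF⟩ := exists_tfactor G ht hreg σ0 hadm0 hFc0
    -- bound 1 : via a maximum independent set
    have hsetne : {k | ∃ S : Finset V, G.IsIndepSet S ∧ S.card = k}.Nonempty :=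
      ⟨0, ∅, fun u hu => absurd hu (Finset.notMem_empty u), Finset.card_empty⟩
    have hbdd : BddAbove {k | ∃ S : Finset V, G.IsIndepSet S ∧ S.card = k} := by
      refine ⟨Fintype.card V, ?_⟩
      rintro k ⟨S, -, rfl⟩
      exact Finset.card_le_univ S
    obtain ⟨S, hSind, hScard⟩ :
        ∃ S : Finset V, G.IsIndepSet S ∧ S.card = G.indepNum :=
      Nat.sSup_mem hsetne hbdd
    set c1 : V → Bool := fun v => decide (v ∈ S) with hc1
    have hcol1 := Fc_colored G ht hreg v0 F hF c1
    have hx1 : X.card ≤ (XC G c1).card :=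
      card_le_of_sig G _ X hX (XC G c1) (sigC G c1) (negEdges_sigC G c1)
        hcol1.1 hcol1.2
    have hb1 := indep_bound G hreg S hSind
    rw [hScard] at hb1
    -- bound 2 : via a maximum cut
    obtain ⟨c2, hb2⟩ := maxcut_bound G hreg
    have hcol2 := Fc_colored G ht hreg v0 F hF c2
    have hx2 : X.card ≤ (XC G c2).card :=
      card_le_of_sig G _ X hX (XC G c2) (sigC G c2) (negEdges_sigC G c2)
        hcol2.1 hcol2.2
    -- combine
    rw [le_min_iff]
    constructor
    · have hXr : (X.card : ℝ) ≤ ((XC G c1).card : ℝ) := by exact_mod_cast hx1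
      have hb1' : 2 * ((XC G c1).card : ℝ) + 2 * ((G.indepNum : ℝ) * (2 * t + 1))
          ≤ (Fintype.card V : ℝ) * (2 * t + 1) := by exact_mod_cast hb1
      nlinarith [hXr, hb1']
    · have hXr : (X.card : ℝ) ≤ ((XC G c2).card : ℝ) := by exact_mod_cast hx2
      have hb2' : 2 * ((XC G c2).card : ℝ) ≤ (Fintype.card V : ℝ) * (t : ℝ) := by
        exact_mod_cast hb2
      nlinarith [hXr, hb2']
end

section
/- For n ≥ 1, let G_n be the cubic graph obtained from a circuit of length 2n by replacing every second edge by two parallel edges. Then the integer flow spectrum satisfies: S̄(G_1) = {3}; S̄(G_2) = {3,4}; and S̄(G_n) = {3,4,6} for every n ≥ 3. -/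
open Finset

open Multigraph

instance (m : ℕ) : NeZero (2 * m + 2) := ⟨by omega⟩

/-- The graph `G_{m+1}` of the family: a cubic graph obtained from a circuit of
length `2(m+1)` in which every second edge is replaced by two parallel edges.
Its vertices are `v_0, …, v_{2(m+1)-1}` (elements of `ZMod (2m+2)`); for each
`i ∈ {0, …, m}` the vertices `v_{2i}` and `v_{2i+1}` are joined by the two parallel
edges `Sum.inl (i, 0)` and `Sum.inl (i, 1)`, and `v_{2i+1}` and `v_{2i+2}` (indices
mod `2(m+1)`) are joined by the single edge `Sum.inr i`. -/
def Gfam (m : ℕ) : Multigraph (ZMod (2 * m + 2)) ((Fin (m + 1) × Fin 2) ⊕ Fin (m + 1)) where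
  ends := fun e =>
    match e with
    | Sum.inl (i, _) =>
        s(((2 * i.val : ℕ) : ZMod (2 * m + 2)), ((2 * i.val + 1 : ℕ) : ZMod (2 * m + 2)))
    | Sum.inr i =>
        s(((2 * i.val + 1 : ℕ) : ZMod (2 * m + 2)), ((2 * i.val + 2 : ℕ) : ZMod (2 * m + 2)))
  not_loop := by
    rintro (⟨i, j⟩ | i) h <;> rw [Sym2.mk_isDiag_iff] at h <;>
      have hv := congrArg ZMod.val h <;>
      rw [ZMod.val_natCast, ZMod.val_natCast] at hv <;>
      have hi := i.isLt
    · rw [Nat.mod_eq_of_lt (by omega), Nat.mod_eq_of_lt (by omega)] at hv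
      omega
    · rcases Nat.lt_or_ge (2 * i.val + 2) (2 * m + 2) with hlt | hge
      · rw [Nat.mod_eq_of_lt (by omega), Nat.mod_eq_of_lt hlt] at hv
        omega
      · have h2 : 2 * i.val + 2 = 2 * m + 2 := by omega
        rw [Nat.mod_eq_of_lt (by omega), h2, Nat.mod_self] at hv
        omega

namespace GAux

open Fin.NatCast

variable {m : ℕ}

abbrev Vtx (m : ℕ) := ZMod (2*m+2)
abbrev Edg (m : ℕ) := (Fin (m + 1) × Fin 2) ⊕ Fin (m + 1)

/-- the vertex with index `j` -/
def vt (m : ℕ) (j : ℕ) : Vtx m := (j : ZMod (2*m+2))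

lemma vt_eq_iff {a b : ℕ} (hb : b < 2*m+2) : vt m a = vt m b ↔ a % (2*m+2) = b := by
  rw [vt, vt, ZMod.natCast_eq_natCast_iff]
  unfold Nat.ModEq
  rw [Nat.mod_eq_of_lt hb]

lemma vt_eq_iff' {a b : ℕ} (ha : a < 2*m+2) (hb : b < 2*m+2) : vt m a = vt m b ↔ a = b := by
  rw [vt_eq_iff hb, Nat.mod_eq_of_lt ha]

lemma vert_cases (v : Vtx m) : ∃ i : Fin (m+1), v = vt m (2*i.val) ∨ v = vt m (2*i.val+1) := by
  obtain ⟨k, hk, rfl⟩ : ∃ k, k < 2*m+2 ∧ v = vt m k :=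
    ⟨v.val, ZMod.val_lt v, (ZMod.natCast_rightInverse v).symm⟩
  refine ⟨⟨k/2, by omega⟩, ?_⟩
  rcases Nat.even_or_odd k with h | h
  · left
    rw [Nat.even_iff] at h
    rw [vt_eq_iff' hk (by simp; omega)]
    simp only []
    omega
  · right
    rw [Nat.odd_iff] at h
    rw [vt_eq_iff' hk (by simp; omega)]
    simp only []
    omega

lemma val_add_one (q : Fin (m+1)) : (q+1).val = (q.val+1) % (m+1) := by
  rw [Fin.add_def]
  simp

lemma mem_inl_even (i q : Fin (m+1)) (j : Fin 2) :
    vt m (2*i.val) ∈ (Gfam m).ends (Sum.inl (q, j)) ↔ q = i := by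
  show _ ∈ s(vt m (2*q.val), vt m (2*q.val+1)) ↔ _
  rw [Sym2.mem_iff, vt_eq_iff' (by omega) (by omega), vt_eq_iff' (by omega) (by omega)]
  constructor
  · rintro (h | h) <;> [exact (Fin.ext (by omega)); omega]
  · rintro rfl; left; rfl

lemma mem_inl_odd (i q : Fin (m+1)) (j : Fin 2) :
    vt m (2*i.val+1) ∈ (Gfam m).ends (Sum.inl (q, j)) ↔ q = i := by
  show _ ∈ s(vt m (2*q.val), vt m (2*q.val+1)) ↔ _
  rw [Sym2.mem_iff, vt_eq_iff' (by omega) (by omega), vt_eq_iff' (by omega) (by omega)]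
  constructor
  · rintro (h | h) <;> [omega; exact (Fin.ext (by omega))]
  · rintro rfl; right; rfl

lemma vt_eq_iff2 {a b : ℕ} (ha : a < 2*m+2) : vt m a = vt m b ↔ b % (2*m+2) = a := by
  rw [eq_comm, vt_eq_iff ha]

lemma mem_inr_odd (i q : Fin (m+1)) :
    vt m (2*i.val+1) ∈ (Gfam m).ends (Sum.inr q) ↔ q = i := by
  show _ ∈ s(vt m (2*q.val+1), vt m (2*q.val+2)) ↔ _
  rw [Sym2.mem_iff, vt_eq_iff' (by omega) (by omega), vt_eq_iff2 (by omega)]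
  have hq := q.isLt
  constructor
  · rintro (h | h)
    · exact Fin.ext (by omega)
    · rcases Nat.lt_or_ge (2*q.val+2) (2*m+2) with hlt | hge
      · rw [Nat.mod_eq_of_lt hlt] at h; omega
      · have he : 2*q.val+2 = 2*m+2 := by omega
        rw [he, Nat.mod_self] at h; omega
  · rintro rfl; left; rfl

lemma vt_wrap (q : Fin (m+1)) : vt m (2*q.val+2) = vt m (2*(q+1).val) := by
  rw [vt_eq_iff (by have := (q+1).isLt; omega), val_add_one]
  have hq := q.isLt
  rcases Nat.lt_or_ge (q.val+1) (m+1) with hlt | hge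
  · rw [Nat.mod_eq_of_lt (by omega), Nat.mod_eq_of_lt hlt]
    omega
  · have h1 : q.val = m := by omega
    have h2 : 2*q.val+2 = 2*m+2 := by omega
    rw [h2, Nat.mod_self, h1]
    simp

lemma mem_inr_even (i q : Fin (m+1)) :
    vt m (2*i.val) ∈ (Gfam m).ends (Sum.inr q) ↔ i = q + 1 := by
  show _ ∈ s(vt m (2*q.val+1), vt m (2*q.val+2)) ↔ _
  rw [Sym2.mem_iff, vt_eq_iff' (by omega) (by omega), vt_wrap,
    vt_eq_iff' (by omega) (by have := (q+1).isLt; omega)]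
  constructor
  · rintro (h | h)
    · omega
    · exact Fin.ext (by omega)
  · rintro rfl; right; rfl

lemma ends_inl (i : Fin (m+1)) (j : Fin 2) :
    (Gfam m).ends (Sum.inl (i, j)) = s(vt m (2*i.val), vt m (2*i.val+1)) := rfl

lemma ends_inr (i : Fin (m+1)) :
    (Gfam m).ends (Sum.inr i) = s(vt m (2*i.val+1), vt m (2*(i+1).val)) := by
  show s(vt m (2*i.val+1), vt m (2*i.val+2)) = _
  rw [vt_wrap]

lemma vt_even_ne_odd (i q : Fin (m+1)) : vt m (2*i.val) ≠ vt m (2*q.val+1) := by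
  rw [Ne, vt_eq_iff' (by omega) (by omega)]
  omega


lemma eq_add_one_iff (i q : Fin (m+1)) : (i = q + 1) ↔ (q = i - 1) := by
  constructor <;> rintro rfl <;> simp

lemma sub_add_cancel'' (i : Fin (m+1)) : (i - 1) + 1 = i := by
  simp

variable {R : Type} [CommRing R]

lemma boundary_even (τ : Edg m → Vtx m → ℤˣ) (f : Edg m → R) (i : Fin (m+1)) :
    (Gfam m).boundary τ f (vt m (2*i.val)) =
      ((τ (Sum.inl (i,0)) (vt m (2*i.val)) : ℤ) : R) * f (Sum.inl (i,0))
    + ((τ (Sum.inl (i,1)) (vt m (2*i.val)) : ℤ) : R) * f (Sum.inl (i,1))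
    + ((τ (Sum.inr (i-1)) (vt m (2*i.val)) : ℤ) : R) * f (Sum.inr (i-1)) := by
  rw [Multigraph.boundary, Multigraph.incEdges, Finset.sum_filter, Fintype.sum_sum_type,
    Fintype.sum_prod_type]
  rw [show (∑ a : Fin (m+1), ∑ j : Fin 2,
      if (Gfam m).Inc (vt m (2*i.val)) (Sum.inl (a, j)) then
        ((τ (Sum.inl (a,j)) (vt m (2*i.val)) : ℤ) : R) * f (Sum.inl (a,j)) else 0) =
      ∑ a : Fin (m+1), ∑ j : Fin 2,
      if a = i then ((τ (Sum.inl (a,j)) (vt m (2*i.val)) : ℤ) : R) * f (Sum.inl (a,j)) else 0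
      from by
        refine Finset.sum_congr rfl fun a _ => Finset.sum_congr rfl fun j _ => ?_
        simp only [Multigraph.Inc, mem_inl_even]]
  rw [show (∑ a : Fin (m+1),
      if (Gfam m).Inc (vt m (2*i.val)) (Sum.inr a) then
        ((τ (Sum.inr a) (vt m (2*i.val)) : ℤ) : R) * f (Sum.inr a) else 0) =
      ∑ a : Fin (m+1),
      if a = i - 1 then ((τ (Sum.inr a) (vt m (2*i.val)) : ℤ) : R) * f (Sum.inr a) else 0
      from by
        refine Finset.sum_congr rfl fun a _ => ?_
        simp only [Multigraph.Inc, mem_inr_even, eq_add_one_iff]]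
  rw [Finset.sum_ite_eq' Finset.univ (i - 1)
    (fun a => ((τ (Sum.inr a) (vt m (2*i.val)) : ℤ) : R) * f (Sum.inr a))]
  have h2 : (∑ a : Fin (m+1), ∑ j : Fin 2,
      if a = i then ((τ (Sum.inl (a,j)) (vt m (2*i.val)) : ℤ) : R) * f (Sum.inl (a,j)) else 0)
      = ∑ j : Fin 2, ((τ (Sum.inl (i,j)) (vt m (2*i.val)) : ℤ) : R) * f (Sum.inl (i,j)) := by
    rw [Finset.sum_comm]
    refine Finset.sum_congr rfl fun j _ => ?_
    rw [Finset.sum_ite_eq' Finset.univ i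
      (fun a => ((τ (Sum.inl (a,j)) (vt m (2*i.val)) : ℤ) : R) * f (Sum.inl (a,j)))]
    simp
  rw [h2]
  simp only [Finset.mem_univ, if_true, Fin.sum_univ_two]

lemma boundary_odd (τ : Edg m → Vtx m → ℤˣ) (f : Edg m → R) (i : Fin (m+1)) :
    (Gfam m).boundary τ f (vt m (2*i.val+1)) =
      ((τ (Sum.inl (i,0)) (vt m (2*i.val+1)) : ℤ) : R) * f (Sum.inl (i,0))
    + ((τ (Sum.inl (i,1)) (vt m (2*i.val+1)) : ℤ) : R) * f (Sum.inl (i,1))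
    + ((τ (Sum.inr i) (vt m (2*i.val+1)) : ℤ) : R) * f (Sum.inr i) := by
  rw [Multigraph.boundary, Multigraph.incEdges, Finset.sum_filter, Fintype.sum_sum_type,
    Fintype.sum_prod_type]
  rw [show (∑ a : Fin (m+1), ∑ j : Fin 2,
      if (Gfam m).Inc (vt m (2*i.val+1)) (Sum.inl (a, j)) then
        ((τ (Sum.inl (a,j)) (vt m (2*i.val+1)) : ℤ) : R) * f (Sum.inl (a,j)) else 0) =
      ∑ a : Fin (m+1), ∑ j : Fin 2,
      if a = i then ((τ (Sum.inl (a,j)) (vt m (2*i.val+1)) : ℤ) : R) * f (Sum.inl (a,j)) else 0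
      from by
        refine Finset.sum_congr rfl fun a _ => Finset.sum_congr rfl fun j _ => ?_
        simp only [Multigraph.Inc, mem_inl_odd]]
  rw [show (∑ a : Fin (m+1),
      if (Gfam m).Inc (vt m (2*i.val+1)) (Sum.inr a) then
        ((τ (Sum.inr a) (vt m (2*i.val+1)) : ℤ) : R) * f (Sum.inr a) else 0) =
      ∑ a : Fin (m+1),
      if a = i then ((τ (Sum.inr a) (vt m (2*i.val+1)) : ℤ) : R) * f (Sum.inr a) else 0
      from by
        refine Finset.sum_congr rfl fun a _ => ?_
        simp only [Multigraph.Inc, mem_inr_odd]]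
  rw [Finset.sum_ite_eq' Finset.univ i
    (fun a => ((τ (Sum.inr a) (vt m (2*i.val+1)) : ℤ) : R) * f (Sum.inr a))]
  have h2 : (∑ a : Fin (m+1), ∑ j : Fin 2,
      if a = i then ((τ (Sum.inl (a,j)) (vt m (2*i.val+1)) : ℤ) : R) * f (Sum.inl (a,j)) else 0)
      = ∑ j : Fin 2, ((τ (Sum.inl (i,j)) (vt m (2*i.val+1)) : ℤ) : R) * f (Sum.inl (i,j)) := by
    rw [Finset.sum_comm]
    refine Finset.sum_congr rfl fun j _ => ?_
    rw [Finset.sum_ite_eq' Finset.univ i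
      (fun a => ((τ (Sum.inl (a,j)) (vt m (2*i.val+1)) : ℤ) : R) * f (Sum.inl (a,j)))]
    simp
  rw [h2]
  simp only [Finset.mem_univ, if_true, Fin.sum_univ_two]

lemma units_solve {a b c : ℤˣ} (h : a * b = c) : b = a * c := by
  rw [← h, ← mul_assoc, Int.units_mul_self, one_mul]

lemma vt_odd_ne_even (i : Fin (m+1)) : vt m (2*i.val+1) ≠ vt m (2*i.val) := by
  rw [Ne, vt_eq_iff' (by omega) (by omega)]; omega

lemma vt_succ_ne_odd (i : Fin (m+1)) : vt m (2*(i+1).val) ≠ vt m (2*i.val+1) := by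
  rw [Ne, vt_eq_iff' (by have := (i+1).isLt; omega) (by omega)]; omega

lemma orient_inl {σ : Edg m → ℤˣ} {τ} (h : (Gfam m).IsOrientation σ τ) (i : Fin (m+1)) (j : Fin 2) :
    τ (Sum.inl (i,j)) (vt m (2*i.val+1)) =
      -σ (Sum.inl (i,j)) * τ (Sum.inl (i,j)) (vt m (2*i.val)) := by
  have h1 := h (Sum.inl (i,j)) (vt m (2*i.val)) (vt m (2*i.val+1)) rfl
  have h2 := units_solve h1
  rw [h2, mul_comm]

lemma orient_inr {σ : Edg m → ℤˣ} {τ} (h : (Gfam m).IsOrientation σ τ) (i : Fin (m+1)) :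
    τ (Sum.inr i) (vt m (2*(i+1).val)) =
      -σ (Sum.inr i) * τ (Sum.inr i) (vt m (2*i.val+1)) := by
  have h1 := h (Sum.inr i) (vt m (2*i.val+1)) (vt m (2*(i+1).val)) (ends_inr i)
  have h2 := units_solve h1
  rw [h2, mul_comm]

/-- Forward direction: any flow yields per-block data satisfying the block equations. -/
lemma blocks_of_flow {σ : Edg m → ℤˣ} {τ} {f : Edg m → R}
    (hor : (Gfam m).IsOrientation σ τ) (hb : ∀ v, (Gfam m).boundary τ f v = 0) :
    ∃ A B γ : Fin (m+1) → R,
      (∀ i, (∃ u : ℤˣ, A i = ((u:ℤ):R) * f (Sum.inl (i,0))) ∧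
            (∃ u : ℤˣ, B i = ((u:ℤ):R) * f (Sum.inl (i,1))) ∧
            (∃ u : ℤˣ, γ i = ((u:ℤ):R) * f (Sum.inr i))) ∧
      (∀ i, A i + B i = ((σ (Sum.inr (i-1)) : ℤ) : R) * γ (i-1) ∧
            ((σ (Sum.inl (i,0)) : ℤ):R) * A i + ((σ (Sum.inl (i,1)) : ℤ):R) * B i = γ i) := by
  refine ⟨fun i => ((τ (Sum.inl (i,0)) (vt m (2*i.val)) : ℤ):R) * f (Sum.inl (i,0)),
          fun i => ((τ (Sum.inl (i,1)) (vt m (2*i.val)) : ℤ):R) * f (Sum.inl (i,1)),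
          fun i => ((τ (Sum.inr i) (vt m (2*i.val+1)) : ℤ):R) * f (Sum.inr i),
          fun i => ⟨⟨_, rfl⟩, ⟨_, rfl⟩, ⟨_, rfl⟩⟩, fun i => ⟨?_, ?_⟩⟩
  · have he := hb (vt m (2*i.val))
    rw [boundary_even τ f i] at he
    have t3 : τ (Sum.inr (i-1)) (vt m (2*i.val)) =
        -σ (Sum.inr (i-1)) * τ (Sum.inr (i-1)) (vt m (2*(i-1).val+1)) := by
      rw [show vt m (2*i.val) = vt m (2*((i-1)+1).val) from by rw [sub_add_cancel'']]
      exact orient_inr hor (i-1)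
    rw [t3] at he
    simp only [Units.val_mul, Units.val_neg, Int.cast_mul, Int.cast_neg] at he
    linear_combination he
  · have ho := hb (vt m (2*i.val+1))
    rw [boundary_odd τ f i, orient_inl hor i 0, orient_inl hor i 1] at ho
    simp only [Units.val_mul, Units.val_neg, Int.cast_mul, Int.cast_neg] at ho
    linear_combination -ho

/-- The standard orientation used for constructions. -/
def τstd (σ : Edg m → ℤˣ) : Edg m → Vtx m → ℤˣ
  | Sum.inl (i,j), v => if v = vt m (2*i.val) then 1 else -σ (Sum.inl (i,j))
  | Sum.inr i, v => if v = vt m (2*i.val+1) then 1 else -σ (Sum.inr i)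

lemma τstd_orient (σ : Edg m → ℤˣ) : (Gfam m).IsOrientation σ (τstd σ) := by
  rintro (⟨i, j⟩ | i) u v h
  · rw [ends_inl] at h
    rcases Sym2.eq_iff.mp h with ⟨rfl, rfl⟩ | ⟨rfl, rfl⟩
    · rw [τstd, if_pos rfl, τstd, if_neg (vt_odd_ne_even i), one_mul]
    · rw [τstd, if_neg (vt_odd_ne_even i), τstd, if_pos rfl, mul_one]
  · rw [ends_inr] at h
    rcases Sym2.eq_iff.mp h with ⟨rfl, rfl⟩ | ⟨rfl, rfl⟩
    · rw [τstd, if_pos rfl, τstd, if_neg (vt_succ_ne_odd i), one_mul]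
    · rw [τstd, if_neg (vt_succ_ne_odd i), τstd, if_pos rfl, mul_one]

/-- Backward direction: per-block data satisfying block equations yields an integer flow. -/
lemma flow_of_blocks {σ : Edg m → ℤˣ} (A B γ : Fin (m+1) → ℤ) (n : ℕ)
    (hE : ∀ i, A i + B i = (σ (Sum.inr (i-1)) : ℤ) * γ (i-1) ∧
          (σ (Sum.inl (i,0)) : ℤ) * A i + (σ (Sum.inl (i,1)) : ℤ) * B i = γ i)
    (hbd : ∀ i, (1 ≤ |A i| ∧ |A i| ≤ (n:ℤ)-1) ∧ (1 ≤ |B i| ∧ |B i| ≤ (n:ℤ)-1) ∧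
          (1 ≤ |γ i| ∧ |γ i| ≤ (n:ℤ)-1)) :
    (Gfam m).HasIntNZFlow σ n := by
  classical
  refine ⟨Sum.elim (fun p => if p.2 = 0 then A p.1 else B p.1) γ, τstd σ, τstd_orient σ,
    ?_, ?_⟩
  · intro v
    obtain ⟨i, hv | hv⟩ := vert_cases v <;> subst hv
    · rw [boundary_even]
      have t1 : τstd σ (Sum.inl (i,0)) (vt m (2*i.val)) = 1 := if_pos rfl
      have t2 : τstd σ (Sum.inl (i,1)) (vt m (2*i.val)) = 1 := if_pos rfl
      have hv : vt m (2*i.val) = vt m (2*((i-1)+1).val) := by rw [sub_add_cancel'']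
      have t3 : τstd σ (Sum.inr (i-1)) (vt m (2*i.val)) = -σ (Sum.inr (i-1)) := by
        rw [τstd, if_neg]
        rw [hv]
        exact vt_succ_ne_odd (i-1)
      rw [t1, t2, t3]
      have h1 := (hE i).1
      simp only [Sum.elim_inl, Sum.elim_inr, Units.val_one, Units.val_neg, Int.cast_one,
        Int.cast_neg, Int.cast_id, one_mul]
      norm_num
      linear_combination h1
    · rw [boundary_odd]
      have t1 : τstd σ (Sum.inl (i,0)) (vt m (2*i.val+1)) = -σ (Sum.inl (i,0)) :=
        if_neg (vt_odd_ne_even i)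
      have t2 : τstd σ (Sum.inl (i,1)) (vt m (2*i.val+1)) = -σ (Sum.inl (i,1)) :=
        if_neg (vt_odd_ne_even i)
      have t3 : τstd σ (Sum.inr i) (vt m (2*i.val+1)) = 1 := if_pos rfl
      rw [t1, t2, t3]
      have h2 := (hE i).2
      simp only [Sum.elim_inl, Sum.elim_inr, Units.val_one, Units.val_neg, Int.cast_one,
        Int.cast_neg, Int.cast_id, one_mul]
      norm_num
      linear_combination -h2
  · rintro (⟨i, j⟩ | i)
    · rcases (hbd i) with ⟨hA, hB, _⟩
      simp only [Sum.elim_inl]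
      fin_cases j <;> simp [hA, hB]
    · simpa using (hbd i).2.2

/-! ### signature combinatorics -/

/-- the sign of digon `i` -/
def ea (σ : Edg m → ℤˣ) (i : Fin (m+1)) : ℤˣ := σ (Sum.inl (i,0)) * σ (Sum.inl (i,1))

/-- the transition sign of block `i` -/
def dd (σ : Edg m → ℤˣ) (i : Fin (m+1)) : ℤˣ := σ (Sum.inl (i,0)) * σ (Sum.inr (i-1))

/-- set of unbalanced digons -/
def Uset (σ : Edg m → ℤˣ) : Finset (Fin (m+1)) :=
  Finset.univ.filter (fun i => ea σ i = -1)

lemma unit_cast_cases (u : ℤˣ) : ((u:ℤ):R) = 1 ∨ ((u:ℤ):R) = -1 := by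
  rcases Int.units_eq_one_or u with h | h <;> rw [h] <;> simp

lemma unit_cast_mul_self (u : ℤˣ) : ((u:ℤ):R) * ((u:ℤ):R) = 1 := by
  rcases unit_cast_cases (R := R) u with h | h <;> rw [h] <;> ring

section Ordered
variable {R : Type} [CommRing R] [LinearOrder R] [IsStrictOrderedRing R]

lemma unit_cast_abs (u : ℤˣ) : |((u:ℤ):R)| = 1 := by
  rcases unit_cast_cases (R := R) u with h | h <;> rw [h] <;> simp

variable {σ : Edg m → ℤˣ} {A B γ : Fin (m+1) → R}

/-- Abbreviation for the block equations. -/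
def BlockEqs (σ : Edg m → ℤˣ) (A B γ : Fin (m+1) → R) : Prop :=
  ∀ i, A i + B i = ((σ (Sum.inr (i-1)) : ℤ) : R) * γ (i-1) ∧
       ((σ (Sum.inl (i,0)) : ℤ):R) * A i + ((σ (Sum.inl (i,1)) : ℤ):R) * B i = γ i

lemma bal_step (hE : BlockEqs σ A B γ) (i : Fin (m+1)) (hb : ea σ i = 1) :
    γ i = ((dd σ i : ℤ) : R) * γ (i-1) := by
  have hsb : σ (Sum.inl (i,1)) = σ (Sum.inl (i,0)) := by
    rw [units_solve hb, mul_one]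
  obtain ⟨h1, h2⟩ := hE i
  rw [hsb] at h2
  simp only [dd, Units.val_mul, Int.cast_mul]
  linear_combination ((σ (Sum.inl (i,0)):ℤ):R) * h1 - h2

lemma unbal_step (hE : BlockEqs σ A B γ)
    (habs : ∀ i, 1 ≤ |A i| ∧ 1 ≤ |B i|) (i : Fin (m+1)) (hu : ea σ i = -1) :
    (∃ x : R, ((σ (Sum.inr (i-1)):ℤ):R) * γ (i-1) + ((σ (Sum.inl (i,0)):ℤ):R) * γ i = 2*x
        ∧ 1 ≤ |x|) ∧ |γ i| ≠ |γ (i-1)| := by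
  have hsb : σ (Sum.inl (i,1)) = -σ (Sum.inl (i,0)) := by
    rw [units_solve hu, mul_neg_one]
  obtain ⟨h1, h2⟩ := hE i
  rw [hsb] at h2
  simp only [Units.val_neg, Int.cast_neg, neg_mul] at h2
  have hsq := unit_cast_mul_self (R := R) (σ (Sum.inl (i,0)))
  constructor
  · exact ⟨A i, by linear_combination (-1 : R) * h1 - ((σ (Sum.inl (i,0)):ℤ):R) * h2 +
      (A i - B i) * hsq, (habs i).1⟩
  · intro hne
    -- |γ i| = |A i - B i|, |γ (i-1)| = |A i + B i|
    have e1 : |γ (i-1)| = |A i + B i| := by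
      rw [h1, abs_mul, unit_cast_abs, one_mul]
    have e2 : |γ i| = |A i - B i| := by
      have : γ i = ((σ (Sum.inl (i,0)):ℤ):R) * (A i - B i) := by linear_combination -h2
      rw [this, abs_mul, unit_cast_abs, one_mul]
    rw [e1, e2] at hne
    have hsq2 : (A i - B i)^2 = (A i + B i)^2 := by
      rw [← sq_abs (A i - B i), ← sq_abs (A i + B i), hne]
    have : A i * B i = 0 := by nlinarith [hsq2]
    rcases mul_eq_zero.mp this with h | h
    · have := (habs i).1; rw [h] at this; simp at this; linarith
    · have := (habs i).2; rw [h] at this; simp at this; linarith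

end Ordered

/-! ### Fin cyclic index helpers -/

lemma fin_cast_val (i : Fin (m+1)) : ((i.val : ℕ) : Fin (m+1)) = i := Fin.cast_val_eq_self i

lemma fin_succ_sub_one {t : ℕ} (h : t < m) : ((t+1 : ℕ) : Fin (m+1)) - 1 = (t : Fin (m+1)) := by
  have h1 : (((t+1 : ℕ)) : Fin (m+1)) ≠ 0 := by
    rw [Ne, Fin.ext_iff, Fin.val_natCast]
    simp only [Fin.val_zero]
    rw [Nat.mod_eq_of_lt (by omega)]
    omega
  rw [Fin.ext_iff, Fin.coe_sub_one, if_neg h1, Fin.val_natCast, Fin.val_natCast,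
    Nat.mod_eq_of_lt (by omega), Nat.mod_eq_of_lt (by omega)]
  omega

lemma fin_zero_sub_one : (0 : Fin (m+1)) - 1 = ((m : ℕ) : Fin (m+1)) := by
  rw [Fin.ext_iff, Fin.coe_sub_one, if_pos rfl, Fin.val_natCast, Nat.mod_eq_of_lt (by omega)]

lemma fin_add_m (i : Fin (m+1)) : i + ((m:ℕ) : Fin (m+1)) = i - 1 := by
  have h : ((m:ℕ) : Fin (m+1)) = 0 - 1 := fin_zero_sub_one.symm
  rw [h]; abel

/-! ### impossibility arguments -/

section Ordered2
variable {R : Type} [CommRing R] [LinearOrder R] [IsStrictOrderedRing R]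
variable {σ : Edg m → ℤˣ} {A B γ : Fin (m+1) → R}

lemma prod_dd_eq (σ : Edg m → ℤˣ) :
    (∏ j ∈ Finset.range (m+1), dd σ ((j:ℕ) : Fin (m+1))) = ∏ i : Fin (m+1), dd σ i := by
  rw [← Fin.prod_univ_eq_prod_range (fun t => dd σ ((t : ℕ) : Fin (m+1))) (m+1)]
  exact Finset.prod_congr rfl fun i _ => by rw [fin_cast_val]

lemma no_flow_bal_neg (hE : BlockEqs σ A B γ) (habs : ∀ i, 1 ≤ |γ i|)
    (hbal : ∀ i, ea σ i = 1) (hP : ∏ i : Fin (m+1), dd σ i = -1) : False := by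
  have key : ∀ t : ℕ, t ≤ m → γ ((t:ℕ) : Fin (m+1)) =
      (∏ j ∈ Finset.range (t+1), ((dd σ ((j:ℕ) : Fin (m+1)) : ℤ) : R)) *
        γ ((m:ℕ) : Fin (m+1)) := by
    intro t
    induction t with
    | zero =>
      intro _
      have h0 := bal_step hE 0 (hbal 0)
      rw [fin_zero_sub_one] at h0
      simpa using h0
    | succ t ih =>
      intro ht
      have h1 := bal_step hE (((t+1:ℕ)) : Fin (m+1)) (hbal _)
      rw [fin_succ_sub_one (by omega), ih (by omega)] at h1
      conv_rhs => rw [Finset.prod_range_succ]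
      rw [h1]
      ring
  have hm := key m le_rfl
  have hcast : (((∏ j ∈ Finset.range (m+1), dd σ ((j:ℕ) : Fin (m+1)) : ℤˣ) : ℤ) : R) =
      ∏ j ∈ Finset.range (m+1), ((dd σ ((j:ℕ) : Fin (m+1)) : ℤ) : R) := by
    push_cast
    rfl
  have h2 : (((∏ j ∈ Finset.range (m+1), dd σ ((j:ℕ) : Fin (m+1)) : ℤˣ) : ℤ) : R) = -1 := by
    rw [prod_dd_eq σ, hP]
    simp
  rw [← hcast, h2] at hm
  have h1 := habs ((m:ℕ) : Fin (m+1))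
  simp only [Units.val_neg, Units.val_one, Int.cast_neg, Int.cast_one, neg_mul, one_mul] at hm
  rcases abs_choice (γ ((m:ℕ) : Fin (m+1))) with h | h <;> rw [h] at h1 <;> linarith

lemma no_flow_k1 (hE : BlockEqs σ A B γ) (habs : ∀ i, 1 ≤ |A i| ∧ 1 ≤ |B i|)
    (i0 : Fin (m+1)) (hu : ea σ i0 = -1) (hbal : ∀ i, i ≠ i0 → ea σ i = 1) : False := by
  have key : ∀ t : ℕ, t ≤ m → |γ (i0 + ((t:ℕ) : Fin (m+1)))| = |γ i0| := by
    intro t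
    induction t with
    | zero => intro _; simp
    | succ t ih =>
      intro ht
      have hne : i0 + (((t+1:ℕ)) : Fin (m+1)) ≠ i0 := by
        intro h
        have h2 : (((t+1:ℕ)) : Fin (m+1)) = 0 := by
          have := congrArg (fun x => x - i0) h
          simpa [add_comm, add_sub_cancel_right] using this
        rw [Fin.ext_iff, Fin.val_natCast, Nat.mod_eq_of_lt (by omega)] at h2
        simp at h2
      have h1 := bal_step hE (i0 + ((t+1:ℕ) : Fin (m+1))) (hbal _ hne)
      have harg : i0 + (((t+1:ℕ)) : Fin (m+1)) - 1 = i0 + ((t:ℕ) : Fin (m+1)) := by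
        push_cast
        abel
      rw [harg] at h1
      rw [h1, abs_mul, unit_cast_abs, one_mul, ih (by omega)]
  have hm := key m le_rfl
  rw [fin_add_m] at hm
  exact (unbal_step hE habs i0 hu).2 hm.symm

end Ordered2

/-! ### integer impossibility lemmas -/

section IntSide
variable {σ : Edg m → ℤˣ} {A B γ : Fin (m+1) → ℤ}

lemma flow_data {n : ℕ} (h : (Gfam m).HasIntNZFlow σ n) :
    ∃ A B γ : Fin (m+1) → ℤ, BlockEqs σ A B γ ∧
      (∀ i, (1 ≤ |A i| ∧ |A i| ≤ (n:ℤ)-1) ∧ (1 ≤ |B i| ∧ |B i| ≤ (n:ℤ)-1) ∧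
            (1 ≤ |γ i| ∧ |γ i| ≤ (n:ℤ)-1)) := by
  obtain ⟨f, τ, hor, hb, hbd⟩ := h
  obtain ⟨A, B, γ, habs, hE⟩ := blocks_of_flow (R := ℤ) hor hb
  refine ⟨A, B, γ, hE, fun i => ?_⟩
  obtain ⟨⟨u1, h1⟩, ⟨u2, h2⟩, ⟨u3, h3⟩⟩ := habs i
  simp only [Int.cast_id] at h1 h2 h3
  have hu : ∀ u : ℤˣ, |(u : ℤ)| = 1 := fun u => by
    rcases Int.units_eq_one_or u with h | h <;> rw [h] <;> simp
  rw [h1, h2, h3, abs_mul, abs_mul, abs_mul, hu, hu, hu, one_mul, one_mul, one_mul]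
  exact ⟨hbd _, hbd _, hbd _⟩

lemma no_flow_two (σ : Edg m → ℤˣ) : ¬ (Gfam m).HasIntNZFlow σ 2 := by
  intro h
  obtain ⟨A, B, γ, hE, hbd⟩ := flow_data h
  have h1 := (hE 0).1
  rcases unit_cast_cases (R := ℤ) (σ (Sum.inr (0-1))) with hc | hc <;> rw [hc] at h1 <;>
    [skip; skip] <;>
  · obtain ⟨⟨hA1, hA2⟩, ⟨hB1, hB2⟩, -⟩ := hbd 0
    obtain ⟨hg1, hg2⟩ := (hbd (0-1)).2.2
    rcases abs_choice (A 0) with ha | ha <;> rcases abs_choice (B 0) with hb | hb <;>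
      rcases abs_choice (γ (0-1)) with hg | hg <;> omega

lemma no_flow_three_of_unbal (i0 : Fin (m+1)) (hu : ea σ i0 = -1)
    (h : (Gfam m).HasIntNZFlow σ 3) : False := by
  obtain ⟨A, B, γ, hE, hbd⟩ := flow_data h
  obtain ⟨⟨x, hx, hx1⟩, hne⟩ := unbal_step hE (fun i => ⟨(hbd i).1.1, (hbd i).2.1.1⟩) i0 hu
  obtain ⟨hg1, hg2⟩ := (hbd i0).2.2
  obtain ⟨hg1', hg2'⟩ := (hbd (i0-1)).2.2
  rcases unit_cast_cases (R := ℤ) (σ (Sum.inr (i0-1))) with hc | hc <;>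
    rcases unit_cast_cases (R := ℤ) (σ (Sum.inl (i0,0))) with hd | hd <;>
    rw [hc, hd] at hx <;>
    rcases abs_choice (γ i0) with ha | ha <;> rcases abs_choice (γ (i0-1)) with hb | hb <;>
    rcases abs_choice x with hxx | hxx <;> omega

lemma parity_step (hE : BlockEqs σ A B γ) (habs : ∀ i, 1 ≤ |A i| ∧ 1 ≤ |B i|) (i : Fin (m+1)) :
    |γ i| % 2 = |γ (i-1)| % 2 := by
  rcases Int.units_eq_one_or (ea σ i) with hb | hb
  · rw [bal_step hE i hb, abs_mul, unit_cast_abs, one_mul]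
  · obtain ⟨⟨x, hx, -⟩, -⟩ := unbal_step hE habs i hb
    rcases unit_cast_cases (R := ℤ) (σ (Sum.inr (i-1))) with hc | hc <;>
      rcases unit_cast_cases (R := ℤ) (σ (Sum.inl (i,0))) with hd | hd <;>
      rw [hc, hd] at hx <;>
      rcases abs_choice (γ i) with ha | ha <;> rcases abs_choice (γ (i-1)) with hbb | hbb <;>
      omega

lemma prod_ea_eq (σ : Edg m → ℤˣ) :
    (∏ i : Fin (m+1), ea σ i) = (-1 : ℤˣ) ^ (Uset σ).card := by
  rw [show (∏ i : Fin (m+1), ea σ i) =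
      ∏ i : Fin (m+1), (if i ∈ Uset σ then (-1 : ℤˣ) else 1) from
    Finset.prod_congr rfl fun i _ => by
      simp only [Uset, Finset.mem_filter, Finset.mem_univ, true_and]
      rcases Int.units_eq_one_or (ea σ i) with h | h <;> rw [h] <;> simp]
  rw [Finset.prod_ite_mem, Finset.univ_inter, Finset.prod_const]

lemma no_flow_five_of_odd (hodd : (∏ i : Fin (m+1), ea σ i) = -1)
    (h : (Gfam m).HasIntNZFlow σ 5) : False := by
  obtain ⟨A, B, γ, hE, hbd⟩ := flow_data h
  have habs : ∀ i, 1 ≤ |A i| ∧ 1 ≤ |B i| := fun i => ⟨(hbd i).1.1, (hbd i).2.1.1⟩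
  -- all |γ i| have the same parity
  have hpar : ∀ i : Fin (m+1), |γ i| % 2 = |γ ((m:ℕ) : Fin (m+1))| % 2 := by
    have key : ∀ t : ℕ, t ≤ m → |γ ((t:ℕ) : Fin (m+1))| % 2 = |γ ((m:ℕ) : Fin (m+1))| % 2 := by
      intro t
      induction t with
      | zero =>
        intro _
        have := parity_step hE habs 0
        rw [fin_zero_sub_one] at this
        simpa using this
      | succ t ih =>
        intro ht
        have h1 := parity_step hE habs (((t+1:ℕ)) : Fin (m+1))
        rw [fin_succ_sub_one (by omega)] at h1
        rw [h1, ih (by omega)]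
    intro i
    have := key i.val (by omega)
    rwa [fin_cast_val] at this
  -- two-valued
  set c : ℤ := if |γ ((m:ℕ) : Fin (m+1))| % 2 = 1 then 1 else 2 with hc
  have htwo : ∀ i, |γ i| = c ∨ |γ i| = c + 2 := by
    intro i
    have h1 := hpar i
    have h2 := (hbd i).2.2
    have h3 := (hbd ((m:ℕ) : Fin (m+1))).2.2
    rw [hc]
    split_ifs with hh <;> omega
  set χ : Fin (m+1) → ℤˣ := fun i => if |γ i| = c then 1 else -1 with hχ
  have hstep : ∀ i, χ i * χ (i-1) = ea σ i := by
    intro i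
    rcases Int.units_eq_one_or (ea σ i) with hb | hb <;> rw [hb]
    · have := bal_step hE i hb
      have heq : |γ i| = |γ (i-1)| := by rw [this, abs_mul, unit_cast_abs, one_mul]
      simp only [hχ, heq]
      split_ifs <;> simp
    · have hne := (unbal_step hE habs i hb).2
      have hcc : c + 2 ≠ c := by omega
      simp only [hχ]
      rcases htwo i with h1 | h1 <;> rcases htwo (i-1) with h2 | h2 <;> rw [h1, h2] at hne ⊢
      · exact absurd rfl hne
      · rw [if_pos rfl, if_neg hcc]; rfl
      · rw [if_neg hcc, if_pos rfl]; rfl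
      · exact absurd rfl hne
  have hprod : (∏ i : Fin (m+1), (χ i * χ (i-1))) = -1 := by
    rw [Finset.prod_congr rfl fun i _ => hstep i, hodd]
  rw [Finset.prod_mul_distrib] at hprod
  have hre : (∏ i : Fin (m+1), χ (i-1)) = ∏ i : Fin (m+1), χ i :=
    Equiv.prod_comp (Equiv.subRight (1 : Fin (m+1))) χ
  rw [hre, ← Finset.prod_mul_distrib] at hprod
  rw [Finset.prod_congr rfl (fun i _ => Int.units_mul_self (χ i)), Finset.prod_const_one]
    at hprod
  exact absurd hprod (by decide)

end IntSide

/-! ### construction helpers -/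

lemma unit_abs (u : ℤˣ) : |(u : ℤ)| = 1 := by
  rcases Int.units_eq_one_or u with h | h <;> rw [h] <;> simp

lemma unit_sq (u : ℤˣ) : (u : ℤ) * (u : ℤ) = 1 := by
  rcases Int.units_eq_one_or u with h | h <;> rw [h] <;> simp

lemma odd_unit_mul (u : ℤˣ) {z : ℤ} (h : Odd z) : Odd ((u:ℤ) * z) := by
  rcases Int.units_eq_one_or u with hu | hu <;> rw [hu]
  · simpa using h
  · simpa using h.neg

lemma split_sum (t : ℤ) (ht : 1 ≤ |t|) :
    ∃ a b : ℤ, a + b = t ∧ 1 ≤ |a| ∧ 1 ≤ |b| ∧ |a| ≤ max |t| 2 ∧ |b| ≤ max |t| 2 := by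
  have h4 : 2 ≤ t ∨ t = 1 ∨ t = -1 ∨ t ≤ -2 := by rcases abs_choice t with h | h <;> omega
  have habs1 : |(1:ℤ)| = 1 := by simp
  have habsm1 : |(-1:ℤ)| = 1 := by simp
  rcases h4 with h | h | h | h
  · have ht' : |t| = t := abs_of_nonneg (by omega)
    have ha : |t - 1| = t - 1 := abs_of_nonneg (by omega)
    exact ⟨t-1, 1, by ring, by omega, by omega, by rw [ha]; exact le_max_of_le_left (by omega),
      by rw [habs1]; exact le_max_of_le_right (by omega)⟩
  · subst h
    have h2 : |(2:ℤ)| = 2 := by simp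
    exact ⟨2, -1, by ring, by omega, by omega, by rw [h2]; exact le_max_of_le_right le_rfl,
      by rw [habsm1]; exact le_max_of_le_right (by omega)⟩
  · subst h
    have h2 : |(-2:ℤ)| = 2 := by simp
    exact ⟨-2, 1, by ring, by omega, by omega, by rw [h2]; exact le_max_of_le_right le_rfl,
      by rw [habs1]; exact le_max_of_le_right (by omega)⟩
  · have ht' : |t| = -t := abs_of_nonpos (by omega)
    have ha : |t + 1| = -(t+1) := abs_of_nonpos (by omega)
    exact ⟨t+1, -1, by ring, by omega, by omega, by rw [ha]; exact le_max_of_le_left (by omega),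
      by rw [habsm1]; exact le_max_of_le_right (by omega)⟩

lemma split_pair (x y : ℤ) (hx : Odd x) (hy : Odd y) (hne : |x| ≠ |y|) :
    ∃ a b : ℤ, a + b = x ∧ a - b = y ∧ 1 ≤ |a| ∧ 1 ≤ |b| ∧
      2*|a| ≤ |x| + |y| ∧ 2*|b| ≤ |x| + |y| := by
  obtain ⟨p, rfl⟩ := hx
  obtain ⟨q, rfl⟩ := hy
  refine ⟨p + q + 1, p - q, by ring, by ring, ?_, ?_, ?_, ?_⟩
  · refine Int.one_le_abs (fun h0 => ?_)
    exact hne (by rw [show (2*p+1 : ℤ) = -(2*q+1) from by omega, abs_neg])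
  · refine Int.one_le_abs (fun h0 => ?_)
    exact hne (by rw [show (2*p+1 : ℤ) = (2*q+1) from by omega])
  · have h1 : (2:ℤ) * |p+q+1| = |(2*p+1) + (2*q+1)| := by
      rw [show (2*p+1) + (2*q+1) = 2*(p+q+1) from by ring, abs_mul]
      simp
    rw [h1]
    exact abs_add_le _ _
  · have h1 : (2:ℤ) * |p-q| = |(2*p+1) - (2*q+1)| := by
      rw [show (2*p+1) - (2*q+1) = 2*(p-q) from by ring, abs_mul]
      simp
    rw [h1]
    exact abs_sub _ _

/-- Master construction: a suitable `γ` pattern yields an integer `n`-flow. -/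
lemma construct_flow (σ : Edg m → ℤˣ) (γ : Fin (m+1) → ℤ) (n : ℕ) (hn : 3 ≤ n)
    (hbd : ∀ i, 1 ≤ |γ i| ∧ |γ i| ≤ (n:ℤ)-1)
    (hblk : ∀ i, (ea σ i = 1 ∧ γ i = ((dd σ i : ℤ)) * γ (i-1)) ∨
      (ea σ i = -1 ∧ Odd (γ i) ∧ Odd (γ (i-1)) ∧ |γ i| ≠ |γ (i-1)| ∧
       |γ i| + |γ (i-1)| ≤ 2*((n:ℤ)-1))) :
    (Gfam m).HasIntNZFlow σ n := by
  have hn' : (2:ℤ) ≤ (n:ℤ)-1 := by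
    have : (3:ℤ) ≤ n := by exact_mod_cast hn
    omega
  have hex : ∀ i, ∃ a b : ℤ, a + b = (σ (Sum.inr (i-1)) : ℤ) * γ (i-1) ∧
      (σ (Sum.inl (i,0)) : ℤ) * a + (σ (Sum.inl (i,1)) : ℤ) * b = γ i ∧
      1 ≤ |a| ∧ |a| ≤ (n:ℤ)-1 ∧ 1 ≤ |b| ∧ |b| ≤ (n:ℤ)-1 := by
    intro i
    have habs_t : |(σ (Sum.inr (i-1)) : ℤ) * γ (i-1)| = |γ (i-1)| := by
      rw [abs_mul, unit_abs, one_mul]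
    rcases hblk i with ⟨hb, hγi⟩ | ⟨hb, hodd1, hodd2, hne, hsum⟩
    · -- balanced
      have hsb : σ (Sum.inl (i,1)) = σ (Sum.inl (i,0)) := by rw [units_solve hb, mul_one]
      obtain ⟨a, b, hab, ha1, hb1, ha2, hb2⟩ :=
        split_sum ((σ (Sum.inr (i-1)) : ℤ) * γ (i-1)) (by rw [habs_t]; exact (hbd _).1)
      refine ⟨a, b, hab, ?_, ha1, ?_, hb1, ?_⟩
      · rw [hsb, hγi]
        simp only [dd, Units.val_mul]
        linear_combination (σ (Sum.inl (i,0)) : ℤ) * hab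
      · refine le_trans ha2 (max_le ?_ hn')
        rw [habs_t]; exact (hbd _).2
      · refine le_trans hb2 (max_le ?_ hn')
        rw [habs_t]; exact (hbd _).2
    · -- unbalanced
      have hsb : σ (Sum.inl (i,1)) = -σ (Sum.inl (i,0)) := by
        rw [units_solve hb, mul_neg_one]
      have habs_y : |(σ (Sum.inl (i,0)) : ℤ) * γ i| = |γ i| := by
        rw [abs_mul, unit_abs, one_mul]
      obtain ⟨a, b, hab, hab2, ha1, hb1, ha2, hb2⟩ :=
        split_pair ((σ (Sum.inr (i-1)) : ℤ) * γ (i-1)) ((σ (Sum.inl (i,0)) : ℤ) * γ i)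
          (odd_unit_mul _ hodd2) (odd_unit_mul _ hodd1)
          (by rw [habs_t, habs_y]; exact fun h => hne h.symm)
      have hsq := unit_sq (σ (Sum.inl (i,0)))
      refine ⟨a, b, hab, ?_, ha1, ?_, hb1, ?_⟩
      · rw [hsb]
        simp only [Units.val_neg, neg_mul]
        linear_combination (σ (Sum.inl (i,0)) : ℤ) * hab2 + (γ i) * hsq
      · rw [habs_t, habs_y] at ha2; omega
      · rw [habs_t, habs_y] at hb2; omega
  choose A B hAB using hex
  exact flow_of_blocks A B γ n (fun i => ⟨(hAB i).1, (hAB i).2.1⟩)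
    (fun i => ⟨⟨(hAB i).2.2.1, (hAB i).2.2.2.1⟩, ⟨(hAB i).2.2.2.2.1, (hAB i).2.2.2.2.2⟩,
      hbd i⟩)

/-! ### the three flow constructions -/

lemma prod_range_univ {M : Type} [CommMonoid M] (F : Fin (m+1) → M) :
    (∏ j ∈ Finset.range (m+1), F ((j:ℕ) : Fin (m+1))) = ∏ i : Fin (m+1), F i := by
  rw [← Fin.prod_univ_eq_prod_range (fun t => F ((t : ℕ) : Fin (m+1))) (m+1)]
  exact Finset.prod_congr rfl fun i _ => by rw [fin_cast_val]

lemma val_sub_one_of_ne {i : Fin (m+1)} (h : i ≠ 0) : (i - 1).val = i.val - 1 := by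
  rw [Fin.coe_sub_one, if_neg h]

lemma val_ne_zero_of_ne {i : Fin (m+1)} (h : i ≠ 0) : i.val ≠ 0 :=
  fun h0 => h (Fin.ext h0)

lemma has_three {σ : Edg m → ℤˣ} (hbal : ∀ i, ea σ i = 1)
    (hP : ∏ i : Fin (m+1), dd σ i = 1) : (Gfam m).HasIntNZFlow σ 3 := by
  set P : ℕ → ℤˣ := fun t => ∏ j ∈ Finset.range (t+1), dd σ ((j:ℕ) : Fin (m+1)) with hPdef
  apply construct_flow σ (fun i => ((P i.val : ℤˣ) : ℤ)) 3 le_rfl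
  · intro i
    rw [unit_abs]
    norm_num
  · intro i
    left
    refine ⟨hbal i, ?_⟩
    by_cases h0 : i = 0
    · subst h0
      have e1 : P (0 : Fin (m+1)).val = dd σ 0 := by
        simp [hPdef]
    -- γ (0-1) : index is m
      have e2 : ((0:Fin (m+1)) - 1).val = m := by
        rw [Fin.coe_sub_one, if_pos rfl]
      have e3 : P m = 1 := by
        rw [hPdef]
        simp only []
        rw [prod_range_univ (dd σ), hP]
      simp only [e1, e2, e3]
      simp
    · have h1 : i.val - 1 + 1 = i.val := by
        have := val_ne_zero_of_ne h0
        omega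
      have h2 : P i.val = P (i.val - 1) * dd σ i := by
        rw [hPdef]
        simp only []
        conv_lhs => rw [← h1, Finset.prod_range_succ]
        rw [h1, fin_cast_val]
      rw [val_sub_one_of_ne h0, h2]
      push_cast
      ring
lemma has_ge_two {σ : Edg m → ℤˣ} (hk : 2 ≤ (Uset σ).card) :
    (Gfam m).HasIntNZFlow σ (if (Uset σ).card % 2 = 1 then 6 else 4) := by
  set k := (Uset σ).card with hkdef
  set n : ℕ := if k % 2 = 1 then 6 else 4 with hndef
  have hn3 : 3 ≤ n := by rw [hndef]; split_ifs <;> omega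
  -- the value pattern
  set p : ℕ → ℤ := fun t => if t = 0 then 1 else if t = k then 1
      else if t = k-1 ∧ k % 2 = 1 then 5 else if t % 2 = 1 then 3 else 1 with hpdef
  have hp_pos : ∀ t, 1 ≤ p t := by
    intro t; rw [hpdef]; simp only []
    split_ifs <;> first | exact ‹False›.elim | omega
  have hp_odd : ∀ t, p t % 2 = 1 := by
    intro t; rw [hpdef]; simp only []
    split_ifs <;> first | exact ‹False›.elim | omega
  have hp_bd : ∀ t, p t ≤ (n:ℤ) - 1 := by
    intro t
    have h6 : (n:ℤ) = 6 ∨ (n:ℤ) = 4 := by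
      rw [hndef]; split_ifs <;> norm_num
    have h6' : k % 2 = 1 → (n:ℤ) = 6 := by
      intro h; rw [hndef, if_pos h]; norm_num
    rw [hpdef]; simp only []
    split_ifs with h1 h2 h3 h4
    · omega
    · omega
    · have := h6' h3.2; omega
    · omega
    · omega
  have hp_step : ∀ t, t < k → p t ≠ p (t+1) := by
    intro t ht; rw [hpdef]; simp only []
    split_ifs <;> first | exact ‹False›.elim | omega
  have hp0 : p 0 = 1 := by rw [hpdef]; simp
  have hpk : p k = 1 := by
    rw [hpdef]; simp only []
    split_ifs <;> first | exact ‹False›.elim | rfl | omega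
  -- the count function
  set C : ℕ → ℕ :=
    fun t => ((Finset.range (t+1)).filter (fun j => ea σ ((j:ℕ):Fin (m+1)) = -1)).card
    with hCdef
  have hCm : C m = k := by
    rw [hCdef, hkdef, Uset]
    simp only []
    rw [Finset.card_filter, Finset.card_filter,
      ← Fin.sum_univ_eq_sum_range (fun j => if ea σ ((j:ℕ):Fin (m+1)) = -1 then 1 else 0) (m+1)]
    exact Finset.sum_congr rfl fun i _ => by rw [fin_cast_val]
  have hCstep : ∀ t, C (t+1) = C t + (if ea σ (((t+1 : ℕ)):Fin (m+1)) = -1 then 1 else 0) := by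
    intro t
    rw [hCdef]; simp only []
    rw [Finset.range_add_one, Finset.filter_insert]
    split_ifs with h
    · rw [Finset.card_insert_of_notMem (by simp)]
    · rw [add_zero]
  have hCmono : ∀ t u : ℕ, t ≤ u → C t ≤ C u := by
    intro t u h
    exact Finset.card_le_card (Finset.filter_subset_filter _ (Finset.range_subset_range.mpr (by omega)))
  have hC0 : C 0 = if ea σ 0 = -1 then 1 else 0 := by
    rw [hCdef]; simp only []
    rw [show Finset.range 1 = {0} from rfl, Finset.filter_singleton]
    have h00 : (((0:ℕ)) : Fin (m+1)) = 0 := by simp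
    rw [h00]
    split_ifs <;> simp
  -- the sign pattern
  have hU0 : (Uset σ).Nonempty := Finset.card_pos.mp (by omega)
  set j0 := (Uset σ).min' hU0 with hj0
  have hj0U : j0 ∈ Uset σ := (Uset σ).min'_mem hU0
  have hj0ea : ea σ j0 = -1 := by
    have := hj0U
    rw [Uset, Finset.mem_filter] at this
    exact this.2
  set base : Fin (m+1) → ℤˣ := fun j => if ea σ j = 1 then dd σ j else 1 with hbase
  set w : ℤˣ := ∏ j ∈ Finset.univ.erase j0, base j with hw
  set d' : Fin (m+1) → ℤˣ := Function.update base j0 w with hd'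
  have hd'_bal : ∀ i, ea σ i = 1 → d' i = dd σ i := by
    intro i hi
    have hne : i ≠ j0 := fun h => by rw [h, hj0ea] at hi; exact absurd hi (by decide)
    rw [hd', Function.update_of_ne hne, hbase]
    simp only []
    rw [if_pos hi]
  have hd'_total : ∏ i : Fin (m+1), d' i = 1 := by
    rw [← Finset.mul_prod_erase Finset.univ d' (Finset.mem_univ j0)]
    have h1 : d' j0 = w := by rw [hd']; exact Function.update_self _ _ _
    have h2 : ∏ j ∈ Finset.univ.erase j0, d' j = w := by
      rw [hw]
      exact Finset.prod_congr rfl fun j hj =>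
        by rw [hd', Function.update_of_ne (Finset.ne_of_mem_erase hj)]
    rw [h1, h2, Int.units_mul_self]
  set Ps : ℕ → ℤˣ := fun t => ∏ j ∈ Finset.range (t+1), d' ((j:ℕ):Fin (m+1)) with hPs
  have hPsm : Ps m = 1 := by
    rw [hPs]; simp only []
    rw [prod_range_univ d', hd'_total]
  have hPs0 : Ps 0 = d' 0 := by
    rw [hPs]; simp only []
    rw [show Finset.range 1 = {0} from rfl, Finset.prod_singleton]
    norm_num
  have hPstep : ∀ (i : Fin (m+1)), i ≠ 0 → Ps i.val = Ps (i.val - 1) * d' i := by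
    intro i h0
    have h1 : i.val - 1 + 1 = i.val := by
      have := val_ne_zero_of_ne h0
      omega
    rw [hPs]; simp only []
    conv_lhs => rw [← h1, Finset.prod_range_succ]
    rw [h1, fin_cast_val]
  -- abs computation
  have habsγ : ∀ t : ℕ, |((Ps t : ℤˣ) : ℤ) * p (C t)| = p (C t) := by
    intro t
    rw [abs_mul, unit_abs, one_mul, abs_of_nonneg (by have := hp_pos (C t); omega)]
  have hzerov : ((0:Fin (m+1))).val = 0 := rfl
  have hsubzv : ((0:Fin (m+1)) - 1).val = m := by rw [Fin.coe_sub_one, if_pos rfl]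
  -- apply the master construction
  apply construct_flow σ (fun i => ((Ps i.val : ℤˣ) : ℤ) * p (C i.val)) n hn3
  · intro i
    rw [habsγ]
    exact ⟨hp_pos _, hp_bd _⟩
  · intro i
    have hCiv : ∀ t : ℕ, t ≤ m → C t ≤ k := fun t ht => hCm ▸ hCmono t m ht
    rcases Int.units_eq_one_or (ea σ i) with hb | hb
    · -- balanced block
      left
      refine ⟨hb, ?_⟩
      by_cases h0 : i = 0
      · subst h0
        simp only [hzerov, hsubzv, hC0, hCm, hPsm]
        rw [if_neg (by rw [hb]; decide), hp0, hpk, hPs0, hd'_bal 0 hb]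
        simp
      · have h1 : i.val - 1 + 1 = i.val := by
          have := val_ne_zero_of_ne h0
          omega
        have hCeq : C i.val = C (i.val - 1) := by
          have := hCstep (i.val - 1)
          rw [h1, fin_cast_val] at this
          rw [this, if_neg (by rw [hb]; decide), add_zero]
        simp only [val_sub_one_of_ne h0, hCeq, hPstep i h0, hd'_bal i hb]
        push_cast
        ring
    · -- unbalanced block
      right
      have hoddγ : ∀ t : ℕ, Odd (((Ps t : ℤˣ) : ℤ) * p (C t)) :=
        fun t => odd_unit_mul _ (Int.odd_iff.mpr (hp_odd _))
      refine ⟨hb, hoddγ _, hoddγ _, ?_, ?_⟩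
      · -- distinct absolute values
        by_cases h0 : i = 0
        · subst h0
          simp only [hzerov, hsubzv, habsγ]
          rw [hCm, hC0, if_pos hb, hpk, ← hp0]
          exact (hp_step 0 (by omega)).symm
        · have h1 : i.val - 1 + 1 = i.val := by
            have := val_ne_zero_of_ne h0
            omega
          have hCeq : C i.val = C (i.val - 1) + 1 := by
            have := hCstep (i.val - 1)
            rw [h1, fin_cast_val] at this
            rw [this, if_pos hb]
          have hlt : C (i.val - 1) < k := by
            have h2 := hCiv i.val (by omega)
            omega
          simp only [val_sub_one_of_ne h0, habsγ]
          rw [hCeq]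
          exact (hp_step _ hlt).symm
      · -- sum bound
        simp only [habsγ]
        have b1 := hp_bd (C i.val)
        have b2 := hp_bd (C ((i-1).val))
        omega

/-! ### plumbing: `Fi`, admissibility -/

lemma has_mono {σ : Edg m → ℤˣ} {a b : ℕ} (hab : a ≤ b) (h : (Gfam m).HasIntNZFlow σ a) :
    (Gfam m).HasIntNZFlow σ b := by
  obtain ⟨f, τ, h1, h2, h3⟩ := h
  refine ⟨f, τ, h1, h2, fun e => ⟨(h3 e).1, le_trans (h3 e).2 ?_⟩⟩
  have : (a:ℤ) ≤ b := by exact_mod_cast hab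
  omega

lemma Fi_eq {σ : Edg m → ℤˣ} {n : ℕ} (hn : 1 ≤ n) (h1 : (Gfam m).HasIntNZFlow σ n)
    (h2 : ¬ (Gfam m).HasIntNZFlow σ (n-1)) : (Gfam m).Fi σ = n := by
  refine le_antisymm (Nat.sInf_le h1) (le_csInf ⟨n, h1⟩ fun b hb => ?_)
  by_contra hc
  exact h2 (has_mono (by omega) hb)

lemma adm_of_has {σ : Edg m → ℤˣ} {n : ℕ} (hn : 2 ≤ n) (h : (Gfam m).HasIntNZFlow σ n) :
    (Gfam m).FlowAdmissible σ := by
  obtain ⟨f, τ, h1, h2, h3⟩ := h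
  refine ⟨n, by exact_mod_cast hn, fun e => ((f e : ℤ) : ℝ), τ, h1, fun v => ?_, fun e => ?_⟩
  · have hbz := h2 v
    rw [Multigraph.boundary] at hbz ⊢
    rw [show (0:ℝ) = ((0:ℤ):ℝ) from by norm_num, ← hbz]
    push_cast
    rfl
  · constructor
    · rw [← Int.cast_abs]
      exact_mod_cast (h3 e).1
    · rw [← Int.cast_abs]
      have := (h3 e).2
      have h4 : ((|f e|:ℤ):ℝ) ≤ (((n:ℤ) - 1 : ℤ):ℝ) := by exact_mod_cast this
      refine le_trans h4 (by push_cast; norm_num)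

lemma adm_blocks {σ : Edg m → ℤˣ} (h : (Gfam m).FlowAdmissible σ) :
    ∃ A B γ : Fin (m+1) → ℝ, BlockEqs σ A B γ ∧
      (∀ i, 1 ≤ |A i| ∧ 1 ≤ |B i| ∧ 1 ≤ |γ i|) := by
  obtain ⟨r, hr, f, τ, hor, hb, hbd⟩ := h
  obtain ⟨A, B, γ, habs, hE⟩ := blocks_of_flow (R := ℝ) hor hb
  refine ⟨A, B, γ, hE, fun i => ?_⟩
  obtain ⟨⟨u1, h1⟩, ⟨u2, h2⟩, ⟨u3, h3⟩⟩ := habs i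
  rw [h1, h2, h3, abs_mul, abs_mul, abs_mul, unit_cast_abs, unit_cast_abs, unit_cast_abs,
    one_mul, one_mul, one_mul]
  exact ⟨(hbd _).1, (hbd _).1, (hbd _).1⟩

lemma ea_one_of_not_mem {σ : Edg m → ℤˣ} {i : Fin (m+1)} (h : i ∉ Uset σ) : ea σ i = 1 := by
  rcases Int.units_eq_one_or (ea σ i) with h1 | h1
  · exact h1
  · exact absurd (show i ∈ Uset σ from Finset.mem_filter.mpr ⟨Finset.mem_univ _, h1⟩) h

lemma not_adm_bal_neg {σ : Edg m → ℤˣ} (hbal : ∀ i, ea σ i = 1)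
    (hP : ∏ i : Fin (m+1), dd σ i = -1) : ¬ (Gfam m).FlowAdmissible σ := by
  intro h
  obtain ⟨A, B, γ, hE, habs⟩ := adm_blocks h
  exact no_flow_bal_neg hE (fun i => (habs i).2.2) hbal hP

lemma not_adm_k1 {σ : Edg m → ℤˣ} (h1 : (Uset σ).card = 1) :
    ¬ (Gfam m).FlowAdmissible σ := by
  obtain ⟨i0, hi0⟩ := Finset.card_eq_one.mp h1
  intro h
  obtain ⟨A, B, γ, hE, habs⟩ := adm_blocks h
  have hu : ea σ i0 = -1 := by
    have : i0 ∈ Uset σ := hi0 ▸ Finset.mem_singleton_self i0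
    rw [Uset, Finset.mem_filter] at this
    exact this.2
  refine no_flow_k1 hE (fun i => ⟨(habs i).1, (habs i).2.1⟩) i0 hu fun i hi => ?_
  refine ea_one_of_not_mem (fun hmem => hi ?_)
  rw [hi0, Finset.mem_singleton] at hmem
  exact hmem

/-- Full classification of flow-admissible signatures. -/
lemma adm_classify {σ : Edg m → ℤˣ} (h : (Gfam m).FlowAdmissible σ) :
    ((Gfam m).Fi σ = 3 ∧ (Uset σ).card = 0) ∨
    ((Gfam m).Fi σ = 4 ∧ 2 ≤ (Uset σ).card) ∨
    ((Gfam m).Fi σ = 6 ∧ 3 ≤ (Uset σ).card) := by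
  rcases Nat.lt_or_ge (Uset σ).card 2 with hk | hk
  · have hk2 : (Uset σ).card = 0 ∨ (Uset σ).card = 1 := by omega
    rcases hk2 with hcard | hcard
    · left
      have hbal : ∀ i, ea σ i = 1 := fun i =>
        ea_one_of_not_mem (by simp [Finset.card_eq_zero.mp hcard])
      refine ⟨?_, hcard⟩
      rcases Int.units_eq_one_or (∏ i : Fin (m+1), dd σ i) with hP | hP
      · exact Fi_eq (by omega) (has_three hbal hP) (no_flow_two σ)
      · exact absurd h (not_adm_bal_neg hbal hP)
    · exact absurd h (not_adm_k1 hcard)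
  · have hflow := has_ge_two (σ := σ) hk
    have hex : ∃ i0, i0 ∈ Uset σ ∧ ea σ i0 = -1 := by
      have hpos : 0 < (Uset σ).card := by omega
      obtain ⟨i0, hi0⟩ := Finset.card_pos.mp hpos
      exact ⟨i0, hi0, (Finset.mem_filter.mp hi0).2⟩
    obtain ⟨i0, hi0U, hi0⟩ := hex
    rcases Nat.even_or_odd (Uset σ).card with he | ho
    · right; left
      rw [Nat.even_iff] at he
      have hne : ¬ ((Uset σ).card % 2 = 1) := by omega
      rw [if_neg hne] at hflow
      exact ⟨Fi_eq (by omega) hflow (fun hf => no_flow_three_of_unbal i0 hi0 hf), hk⟩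
    · right; right
      have ho' := ho
      rw [Nat.odd_iff] at ho'
      rw [if_pos ho'] at hflow
      have hprod : (∏ i : Fin (m+1), ea σ i) = -1 := by
        rw [prod_ea_eq σ, Odd.neg_one_pow ho]
      refine ⟨Fi_eq (by omega) hflow (fun hf => no_flow_five_of_odd hprod hf), ?_⟩
      omega

/-! ### spectrum membership -/

lemma spec3 (m : ℕ) : 3 ∈ (Gfam m).IntSpectrum := by
  have hbal : ∀ i, ea (m := m) (fun _ => 1) i = 1 := fun i => by rw [ea, one_mul]
  have hP : ∏ i : Fin (m+1), dd (m := m) (fun _ => 1) i = 1 := by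
    rw [Finset.prod_congr rfl fun i _ => show dd (m := m) (fun _ => 1) i = 1 from
      by rw [dd, one_mul]]
    exact Finset.prod_const_one
  have h3 := has_three hbal hP
  exact ⟨fun _ => 1, adm_of_has (by omega) h3, Fi_eq (by omega) h3 (no_flow_two _)⟩

lemma spec4 (m' : ℕ) : 4 ∈ (Gfam (m'+1)).IntSpectrum := by
  set m := m' + 1 with hm
  set σ : Edg m → ℤˣ :=
    fun e => if e = Sum.inl (0,1) ∨ e = Sum.inl (1,1) then -1 else 1 with hσ
  have hea : ∀ i : Fin (m+1), ea σ i = (if i = 0 ∨ i = 1 then -1 else 1) := by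
    intro i
    have econd : ((Sum.inl (i,(1:Fin 2)) : Edg m) = Sum.inl (0,1) ∨
        (Sum.inl (i,(1:Fin 2)) : Edg m) = Sum.inl (1,1)) ↔ (i = 0 ∨ i = 1) := by
      simp [Prod.ext_iff]
    have hcond0 : ¬ ((Sum.inl (i,(0:Fin 2)) : Edg m) = Sum.inl (0,1) ∨
        (Sum.inl (i,(0:Fin 2)) : Edg m) = Sum.inl (1,1)) := by
      simp [Prod.ext_iff]
    rw [ea, hσ]
    simp only []
    rw [if_neg hcond0, one_mul]
    by_cases h : i = 0 ∨ i = 1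
    · rw [if_pos (econd.mpr h), if_pos h]
    · rw [if_neg (fun hc => h (econd.mp hc)), if_neg h]
  have hU : Uset σ = {0, 1} := by
    ext i
    rw [Uset, Finset.mem_filter, hea]
    simp only [Finset.mem_univ, true_and, Finset.mem_insert, Finset.mem_singleton]
    split_ifs with h
    · simpa using h
    · simp only [iff_false, show ¬((1:ℤˣ) = -1) from by decide]
      simpa using h
  have hcard : (Uset σ).card = 2 := by
    rw [hU, Finset.card_insert_of_notMem (by simp [Fin.zero_ne_one]), Finset.card_singleton]
  have hflow := has_ge_two (σ := σ) (by omega)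
  rw [hcard] at hflow
  norm_num at hflow
  have h0U : ea σ 0 = -1 := by rw [hea]; simp
  exact ⟨σ, adm_of_has (by omega) hflow,
    Fi_eq (by omega) hflow (fun hf => no_flow_three_of_unbal 0 h0U hf)⟩

lemma spec6 (m'' : ℕ) : 6 ∈ (Gfam (m''+2)).IntSpectrum := by
  set m := m'' + 2 with hm
  set σ : Edg m → ℤˣ :=
    fun e => if e = Sum.inl (0,1) ∨ e = Sum.inl (1,1) ∨ e = Sum.inl (2,1) then -1 else 1 with hσ
  have hea : ∀ i : Fin (m+1), ea σ i = (if i = 0 ∨ i = 1 ∨ i = 2 then -1 else 1) := by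
    intro i
    have econd : ((Sum.inl (i,(1:Fin 2)) : Edg m) = Sum.inl (0,1) ∨
        (Sum.inl (i,(1:Fin 2)) : Edg m) = Sum.inl (1,1) ∨
        (Sum.inl (i,(1:Fin 2)) : Edg m) = Sum.inl (2,1)) ↔ (i = 0 ∨ i = 1 ∨ i = 2) := by
      simp [Prod.ext_iff]
    have hcond0 : ¬ ((Sum.inl (i,(0:Fin 2)) : Edg m) = Sum.inl (0,1) ∨
        (Sum.inl (i,(0:Fin 2)) : Edg m) = Sum.inl (1,1) ∨
        (Sum.inl (i,(0:Fin 2)) : Edg m) = Sum.inl (2,1)) := by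
      simp [Prod.ext_iff]
    rw [ea, hσ]
    simp only []
    rw [if_neg hcond0, one_mul]
    by_cases h : i = 0 ∨ i = 1 ∨ i = 2
    · rw [if_pos (econd.mpr h), if_pos h]
    · rw [if_neg (fun hc => h (econd.mp hc)), if_neg h]
  have hU : Uset σ = {0, 1, 2} := by
    ext i
    rw [Uset, Finset.mem_filter, hea]
    simp only [Finset.mem_univ, true_and, Finset.mem_insert, Finset.mem_singleton]
    split_ifs with h
    · simpa using h
    · simp only [iff_false, show ¬((1:ℤˣ) = -1) from by decide]
      simpa using h
  have h01 : (0 : Fin (m+1)) ≠ 1 := Fin.zero_ne_one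
  have h02 : (0 : Fin (m+1)) ≠ 2 := by
    rw [Ne, Fin.ext_iff]
    simp [hm]
    rw [Nat.mod_eq_of_lt (by omega)]; omega
  have h12 : (1 : Fin (m+1)) ≠ 2 := by
    rw [Ne, Fin.ext_iff]
    simp [hm]
    rw [Nat.mod_eq_of_lt (by omega)]; omega
  have hcard : (Uset σ).card = 3 := by
    rw [hU, Finset.card_insert_of_notMem (by simp [h01, h02]),
      Finset.card_insert_of_notMem (by simp [h12]), Finset.card_singleton]
  have hflow := has_ge_two (σ := σ) (by omega)
  rw [hcard] at hflow
  norm_num at hflow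
  have hprod : (∏ i : Fin (m+1), ea σ i) = -1 := by
    rw [prod_ea_eq σ, hcard]
    decide
  exact ⟨σ, adm_of_has (by omega) hflow,
    Fi_eq (by omega) hflow (fun hf => no_flow_five_of_odd hprod hf)⟩

lemma spec_sub (m : ℕ) : (Gfam m).IntSpectrum ⊆ {3, 4, 6} := by
  rintro n ⟨σ, hadm, rfl⟩
  rcases adm_classify hadm with ⟨h3, -⟩ | ⟨h4, -⟩ | ⟨h6, -⟩
  · rw [h3]; simp
  · rw [h4]; simp
  · rw [h6]; simp

lemma spec_sub0 : (Gfam 0).IntSpectrum ⊆ {3} := by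
  rintro n ⟨σ, hadm, rfl⟩
  have hle : (Uset σ).card ≤ 1 := le_trans (Finset.card_le_univ _) (by simp)
  rcases adm_classify hadm with ⟨h3, -⟩ | ⟨-, hc⟩ | ⟨-, hc⟩
  · rw [h3]; simp
  · omega
  · omega

lemma spec_sub1 : (Gfam 1).IntSpectrum ⊆ {3, 4} := by
  rintro n ⟨σ, hadm, rfl⟩
  have hle : (Uset σ).card ≤ 2 := le_trans (Finset.card_le_univ _) (by simp)
  rcases adm_classify hadm with ⟨h3, -⟩ | ⟨h4, -⟩ | ⟨-, hc⟩
  · rw [h3]; simp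
  · rw [h4]; simp
  · omega

end GAux

/-- `S̄(G_1) = {3}`, `S̄(G_2) = {3, 4}`, and `S̄(G_n) = {3, 4, 6}` for every `n ≥ 3`
(here `Gfam m` is the graph `G_{m+1}`, so `G_n = Gfam (n - 1)`). -/
theorem stmt18 :
    (Gfam 0).IntSpectrum = {3} ∧
    (Gfam 1).IntSpectrum = {3, 4} ∧
    ∀ n : ℕ, 3 ≤ n → (Gfam (n - 1)).IntSpectrum = {3, 4, 6} := by
  refine ⟨?_, ?_, ?_⟩
  · apply Set.Subset.antisymm GAux.spec_sub0
    intro n hn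
    rw [Set.mem_singleton_iff] at hn
    subst hn
    exact GAux.spec3 0
  · apply Set.Subset.antisymm GAux.spec_sub1
    intro n hn
    rcases hn with rfl | hn
    · exact GAux.spec3 1
    · rw [Set.mem_singleton_iff] at hn
      subst hn
      exact GAux.spec4 0
  · intro n hn
    have h1 : n - 1 = (n-3) + 2 := by omega
    rw [h1]
    apply Set.Subset.antisymm (GAux.spec_sub _)
    intro x hx
    rcases hx with rfl | hx
    · exact GAux.spec3 _
    · rcases hx with rfl | hx
      · have h2 := GAux.spec4 (n-3+1)
        have h3 : n - 3 + 1 + 1 = n - 3 + 2 := by omega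
        rwa [h3] at h2
      · rw [Set.mem_singleton_iff] at hx
        subst hx
        exact GAux.spec6 _
end

section
/- Let (G,σ) be a signed graph. If (G,σ) is the union of two balanced eulerian subgraphs, i.e., there are subgraphs H_1 and H_2 of G, each with all vertex degrees even, such that E(H_1) ∪ E(H_2) = E(G) and (H_i, σ|_{H_i}) is balanced for i = 1,2, then F(G,σ) ≤ 4. -/
open Finset

section Helpers

namespace Multigraph

variable {V E : Type} [Fintype V] [Fintype E] [DecidableEq V] [DecidableEq E]

lemma mem_incEdges {G : Multigraph V E} {v : V} {e : E} :
    e ∈ G.incEdges v ↔ v ∈ G.ends e := by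
  rw [incEdges, Finset.mem_filter]; simp [Inc]

lemma ends_ne {G : Multigraph V E} {e : E} {u v : V} (h : G.ends e = s(u, v)) : u ≠ v := by
  intro huv
  exact G.not_loop e (by rw [h]; exact Sym2.mk_isDiag_iff.mpr huv)

lemma sym2_exists (z : Sym2 V) : ∃ p : V × V, z = s(p.1, p.2) :=
  z.ind fun a b => ⟨(a, b), rfl⟩

/-- a chosen ordered pair of endpoints of an unordered pair -/
noncomputable def pr (z : Sym2 V) : V × V := (sym2_exists z).choose

lemma pr_spec (z : Sym2 V) : z = s((pr z).1, (pr z).2) := (sym2_exists z).choose_spec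

/-- a default orientation of `(G, σ)` -/
noncomputable def someOrientation (G : Multigraph V E) (σ : E → ℤˣ) : E → V → ℤˣ :=
  fun e v => if v = (pr (G.ends e)).1 then 1 else -σ e

lemma someOrientation_spec (G : Multigraph V E) (σ : E → ℤˣ) :
    G.IsOrientation σ (G.someOrientation σ) := by
  intro e u v h
  have hp : G.ends e = s((pr (G.ends e)).1, (pr (G.ends e)).2) := pr_spec _
  have hne : (pr (G.ends e)).1 ≠ (pr (G.ends e)).2 := ends_ne hp
  have h2 : s(u, v) = s((pr (G.ends e)).1, (pr (G.ends e)).2) := h ▸ hp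
  rcases Sym2.eq_iff.mp h2 with ⟨h3, h4⟩ | ⟨h3, h4⟩
  · subst h3; subst h4
    simp only [someOrientation, if_pos rfl, if_neg (Ne.symm hne), if_true, one_mul]
  · subst h3; subst h4
    simp only [someOrientation, if_neg (Ne.symm hne), if_pos rfl, if_true, mul_one]

lemma Circuit.n_pos {G : Multigraph V E} (C : G.Circuit) : C.n ≠ 0 := by
  intro h
  have h1 : (0 : Fin (C.n + 1)) + 1 = 0 := by
    apply Fin.ext
    simp [h]
  have h2 := C.ends_eq 0
  rw [h1] at h2
  exact ends_ne h2 rfl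

lemma Circuit.one_ne_zero {G : Multigraph V E} (C : G.Circuit) : (1 : Fin (C.n + 1)) ≠ 0 := by
  have hn := C.n_pos
  intro h
  have h1 : (1 : Fin (C.n + 1)).val = 0 := by rw [h]; rfl
  rw [Fin.val_one'] at h1
  rcases Nat.lt_or_ge 1 (C.n + 1) with h2 | h2
  · rw [Nat.mod_eq_of_lt h2] at h1; omega
  · omega

lemma Circuit.sub_one_ne {G : Multigraph V E} (C : G.Circuit) (k : Fin (C.n + 1)) :
    k - 1 ≠ k := by
  rw [Ne, sub_eq_self]; exact C.one_ne_zero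

lemma Circuit.add_one_ne {G : Multigraph V E} (C : G.Circuit) (k : Fin (C.n + 1)) :
    k + 1 ≠ k := by
  rw [Ne, add_eq_left]; exact C.one_ne_zero

lemma Circuit.vert_mem_ends {G : Multigraph V E} (C : G.Circuit) {k j : Fin (C.n + 1)}
    (h : C.vert k ∈ G.ends (C.edge j)) : k = j ∨ k = j + 1 := by
  rw [C.ends_eq j, Sym2.mem_iff] at h
  rcases h with h | h
  · exact Or.inl (C.vert_inj h)
  · exact Or.inr (C.vert_inj h)

/-- the edge set of a circuit -/
def Circuit.edges {G : Multigraph V E} (C : G.Circuit) : Finset E :=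
  Finset.univ.image C.edge

lemma Circuit.mem_edges {G : Multigraph V E} (C : G.Circuit) {e : E} :
    e ∈ C.edges ↔ ∃ i, C.edge i = e := by
  simp [Circuit.edges]

lemma Circuit.inc_inter_eq_pair {G : Multigraph V E} (C : G.Circuit) (k : Fin (C.n + 1)) :
    G.incEdges (C.vert k) ∩ C.edges = {C.edge (k - 1), C.edge k} := by
  ext e
  simp only [Finset.mem_inter, mem_incEdges, C.mem_edges, Finset.mem_insert,
    Finset.mem_singleton]
  constructor
  · rintro ⟨hv, i, rfl⟩
    rcases C.vert_mem_ends hv with h | h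
    · right; rw [h]
    · left; subst h; rw [add_sub_cancel_right]
  · rintro (rfl | rfl)
    · refine ⟨?_, ⟨_, rfl⟩⟩
      rw [C.ends_eq (k - 1), sub_add_cancel]
      exact Sym2.mem_mk_right _ _
    · refine ⟨?_, ⟨_, rfl⟩⟩
      rw [C.ends_eq k]
      exact Sym2.mem_mk_left _ _

lemma Circuit.inc_inter_eq_empty {G : Multigraph V E} (C : G.Circuit) {v : V}
    (h : ∀ k, v ≠ C.vert k) : G.incEdges v ∩ C.edges = ∅ := by
  ext e
  simp only [Finset.mem_inter, mem_incEdges, C.mem_edges, Finset.notMem_empty, iff_false]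
  rintro ⟨hv, i, rfl⟩
  rw [C.ends_eq i, Sym2.mem_iff] at hv
  rcases hv with hv | hv
  · exact h _ hv
  · exact h _ hv

lemma Circuit.prod_sigma_eq_one {G : Multigraph V E} {σ : E → ℤˣ} {C : G.Circuit}
    (h : Even (C.negCount σ)) : ∏ i, σ (C.edge i) = 1 := by
  classical
  rw [← Finset.prod_filter_mul_prod_filter_not Finset.univ (fun i => σ (C.edge i) = -1)]
  have h1 : ∏ i ∈ Finset.univ.filter (fun i => σ (C.edge i) = -1), σ (C.edge i)
      = (-1 : ℤˣ) ^ (C.negCount σ) := by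
    rw [Finset.prod_congr rfl (fun i hi => (Finset.mem_filter.mp hi).2),
      Finset.prod_const, Circuit.negCount]
  have h2 : ∏ i ∈ Finset.univ.filter (fun i => ¬ σ (C.edge i) = -1), σ (C.edge i) = 1 :=
    Finset.prod_eq_one fun i hi =>
      (Int.units_eq_one_or _).resolve_right (Finset.mem_filter.mp hi).2
  rw [h1, h2, mul_one, h.neg_one_pow]

end Multigraph

end Helpers

namespace Multigraph

variable {V E : Type} [Fintype V] [Fintype E] [DecidableEq V] [DecidableEq E]

lemma exists_circuit (G : Multigraph V E) (F : Finset E)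
    (heven : ∀ v, Even ((G.incEdges v ∩ F).card)) (hne : F.Nonempty) :
    ∃ C : G.Circuit, ∀ i, C.edge i ∈ F := by
  classical
  have grow : ∀ (m k : ℕ), Fintype.card V ≤ k + m → 1 ≤ k →
      ∀ (vert : ℕ → V) (edge : ℕ → E),
      (∀ i j, i ≤ k → j ≤ k → vert i = vert j → i = j) →
      (∀ i, i < k → edge i ∈ F ∧ G.ends (edge i) = s(vert i, vert (i + 1))) →
      ∃ C : G.Circuit, ∀ i, C.edge i ∈ F := by
    intro m
    induction m with
    | zero =>
      intro k hcard hk vert edge hinj hprop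
      exfalso
      have hle : Fintype.card (Fin (k + 1)) ≤ Fintype.card V :=
        Fintype.card_le_of_injective (fun i => vert i.val)
          (fun i j hij => Fin.ext (hinj i.val j.val (Nat.lt_succ_iff.mp i.isLt)
            (Nat.lt_succ_iff.mp j.isLt) hij))
      rw [Fintype.card_fin] at hle
      omega
    | succ m ih =>
      intro k hcard hk vert edge hinj hprop
      have hk1 : k - 1 + 1 = k := by omega
      obtain ⟨hmem, hends⟩ := hprop (k - 1) (by omega)
      rw [hk1] at hends
      have hprevinc : edge (k - 1) ∈ G.incEdges (vert k) ∩ F :=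
        Finset.mem_inter.mpr ⟨mem_incEdges.mpr (by rw [hends]; exact Sym2.mem_mk_right _ _), hmem⟩
      have hcard2 : 1 < (G.incEdges (vert k) ∩ F).card := by
        rcases heven (vert k) with ⟨t, ht⟩
        have h1 : 0 < (G.incEdges (vert k) ∩ F).card := Finset.card_pos.mpr ⟨_, hprevinc⟩
        omega
      obtain ⟨e', he'mem, he'ne⟩ := Finset.exists_mem_ne hcard2 (edge (k - 1))
      rw [Finset.mem_inter, mem_incEdges] at he'mem
      obtain ⟨w, hw⟩ := Sym2.mem_iff_exists.mp he'mem.1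
      have hwk : w ≠ vert k := (ends_ne hw).symm
      have he'F : e' ∈ F := he'mem.2
      have he'path : ∀ j, j < k → e' ≠ edge j := by
        intro j hj heq
        have hj2 := (hprop j hj).2
        have hmem2 : vert k ∈ s(vert j, vert (j + 1)) := by
          rw [← hj2, ← heq, hw]; exact Sym2.mem_mk_left _ _
        rcases Sym2.mem_iff.mp hmem2 with h | h
        · have := hinj k j le_rfl (le_of_lt hj) h; omega
        · have := hinj k (j + 1) le_rfl hj h
          exact he'ne (by rw [heq]; congr 1; omega)
      have hedge_inj : ∀ a b, a < k → b < k → edge a = edge b → a = b := by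
        intro a b ha hb heq
        have h1 := (hprop a ha).2
        have h2 := (hprop b hb).2
        rw [heq, h2] at h1
        rcases Sym2.eq_iff.mp h1.symm with ⟨hx, hy⟩ | ⟨hx, hy⟩
        · exact hinj a b (le_of_lt ha) (le_of_lt hb) hx
        · have hb1 := hinj a (b + 1) (le_of_lt ha) hb hx
          have hb2 := hinj (a + 1) b ha (le_of_lt hb) hy
          omega
      by_cases hwold : ∃ i, i ≤ k ∧ vert i = w
      · obtain ⟨i0, hi0k, hwi⟩ := hwold
        have hi0 : i0 < k := lt_of_le_of_ne hi0k (fun hh => hwk (by rw [← hwi, hh]))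
        set n := k - i0 with hn
        have hn1 : i0 + n = k := by omega
        have hvin : ∀ j : Fin (n + 1), i0 + j.val ≤ k := fun j => by
          have := Nat.lt_succ_iff.mp j.isLt; omega
        refine ⟨⟨n, fun j => vert (i0 + j.val),
            fun j => if j.val = n then e' else edge (i0 + j.val), ?_, ?_, ?_⟩, ?_⟩
        · intro j1 j2 h
          exact Fin.ext (by have := hinj _ _ (hvin j1) (hvin j2) h; omega)
        · intro j1 j2 h
          simp only at h
          by_cases hj1 : j1.val = n <;> by_cases hj2 : j2.val = n
          · exact Fin.ext (by omega)
          · rw [if_pos hj1, if_neg hj2] at h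
            have hlt : i0 + j2.val < k := by
              have := Nat.lt_succ_iff.mp j2.isLt; omega
            exact absurd h (he'path _ hlt)
          · rw [if_neg hj1, if_pos hj2] at h
            have hlt : i0 + j1.val < k := by
              have := Nat.lt_succ_iff.mp j1.isLt; omega
            exact absurd h.symm (he'path _ hlt)
          · rw [if_neg hj1, if_neg hj2] at h
            have hlt1 : i0 + j1.val < k := by
              have := Nat.lt_succ_iff.mp j1.isLt; omega
            have hlt2 : i0 + j2.val < k := by
              have := Nat.lt_succ_iff.mp j2.isLt; omega
            exact Fin.ext (by have := hedge_inj _ _ hlt1 hlt2 h; omega)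
        · intro j
          by_cases hj : j.val = n
          · have hjlast : j = Fin.last n := Fin.ext hj
            have hj1 : (j + 1).val = 0 := by rw [Fin.val_add_one, if_pos hjlast]
            simp only [hj1, Nat.add_zero]
            rw [if_pos hj, hw, hj, hn1, hwi]
          · have hjlt : j.val < n := lt_of_le_of_ne (Nat.lt_succ_iff.mp j.isLt) hj
            have hj1 : (j + 1).val = j.val + 1 := by
              rw [Fin.val_add_one, if_neg (fun hh => hj (by rw [hh]; rfl))]
            have hlt : i0 + j.val < k := by omega
            simp only [if_neg hj, hj1]
            rw [(hprop _ hlt).2, ← Nat.add_assoc]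
        · intro i
          by_cases hi : i.val = n
          · simpa [hi] using he'F
          · have hjlt : i.val < n := lt_of_le_of_ne (Nat.lt_succ_iff.mp i.isLt) hi
            simpa [hi] using (hprop (i0 + i.val) (by omega)).1
      · push_neg at hwold
        refine ih (k + 1) (by omega) (by omega)
          (fun i => if i = k + 1 then w else vert i)
          (fun i => if i = k then e' else edge i) ?_ ?_
        · intro i j hi hj hij
          by_cases hik : i = k + 1 <;> by_cases hjk : j = k + 1
          · omega
          · rw [if_pos hik, if_neg hjk] at hij
            exact absurd hij.symm (hwold j (by omega))
          · rw [if_neg hik, if_pos hjk] at hij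
            exact absurd hij (hwold i (by omega))
          · rw [if_neg hik, if_neg hjk] at hij
            exact hinj i j (by omega) (by omega) hij
        · intro i hi
          by_cases hik : i = k
          · subst hik
            have hne3 : i ≠ i + 1 := by omega
            simp [hne3, hw, he'F]
          · have hilt : i < k := by omega
            simp only [if_neg hik, if_neg (by omega : ¬ i = k + 1),
              if_neg (by omega : ¬ i + 1 = k + 1)]
            exact hprop i hilt
  obtain ⟨e0, he0⟩ := hne
  have hp := pr_spec (G.ends e0)
  have hne2 := ends_ne hp
  refine grow (Fintype.card V) 1 (by omega) le_rfl
    (fun i => match i with | 0 => (pr (G.ends e0)).1 | _ + 1 => (pr (G.ends e0)).2)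
    (fun _ => e0) ?_ ?_
  · intro i j hi hj hij
    interval_cases i <;> interval_cases j <;>
      first | rfl | exact absurd hij hne2 | exact absurd hij.symm hne2
  · intro i hi
    interval_cases i
    exact ⟨he0, hp⟩

end Multigraph

namespace Multigraph

variable {V E : Type} [Fintype V] [Fintype E] [DecidableEq V] [DecidableEq E]

lemma exists_good_orientation (G : Multigraph V E) (σ : E → ℤˣ) :
    ∀ (N : ℕ) (F : Finset E), F.card ≤ N →
    (∀ v, Even ((G.incEdges v ∩ F).card)) → G.BalancedOn σ F →
    ∃ τ, G.IsOrientation σ τ ∧ ∀ v, ∑ e ∈ G.incEdges v ∩ F, ((τ e v : ℤˣ) : ℤ) = 0 := by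
  intro N
  induction N with
  | zero =>
    intro F hF _ _
    refine ⟨G.someOrientation σ, G.someOrientation_spec σ, fun v => ?_⟩
    have hFe : F = ∅ := Finset.card_eq_zero.mp (Nat.le_zero.mp hF)
    simp [hFe]
  | succ N ih =>
    intro F hF heven hbal
    rcases Finset.eq_empty_or_nonempty F with rfl | hne
    · exact ⟨G.someOrientation σ, G.someOrientation_spec σ, fun v => by simp⟩
    obtain ⟨C, hCF⟩ := G.exists_circuit F heven hne
    have hsub : C.edges ⊆ F := fun e he => by
      obtain ⟨i, rfl⟩ := C.mem_edges.mp he; exact hCF i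
    set F' := F \ C.edges with hF'def
    have hF'card : F'.card ≤ N := by
      have h1 : F' ⊂ F := Finset.sdiff_ssubset hsub ⟨C.edge 0, C.mem_edges.mpr ⟨0, rfl⟩⟩
      have := Finset.card_lt_card h1; omega
    have hint : ∀ v, G.incEdges v ∩ F' = (G.incEdges v ∩ F) \ (G.incEdges v ∩ C.edges) := by
      intro v; ext e
      simp only [hF'def, Finset.mem_inter, Finset.mem_sdiff]
      tauto
    have hCcard : ∀ v, Even ((G.incEdges v ∩ C.edges).card) := by
      intro v
      by_cases hv : ∃ k, v = C.vert k
      · obtain ⟨k, rfl⟩ := hv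
        rw [C.inc_inter_eq_pair k,
          Finset.card_pair (fun h => C.sub_one_ne k (C.edge_inj h))]
        exact ⟨1, rfl⟩
      · push_neg at hv
        rw [C.inc_inter_eq_empty hv]; simp
    have heven' : ∀ v, Even ((G.incEdges v ∩ F').card) := by
      intro v
      rw [hint v, Finset.card_sdiff_of_subset (Finset.inter_subset_inter Finset.Subset.rfl hsub)]
      exact (heven v).tsub (hCcard v)
    have hbal' : G.BalancedOn σ F' := fun C' h =>
      hbal C' fun i => Finset.sdiff_subset (h i)
    obtain ⟨τ', hτ'or, hτ'sum⟩ := ih F' hF'card heven' hbal'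
    have hprod : ∏ i, σ (C.edge i) = 1 := C.prod_sigma_eq_one (hbal C hCF)
    open Fin.NatCast in set s' : ℕ → ℤˣ := fun m => σ (C.edge (m : Fin (C.n + 1))) with hs'def
    set t : Fin (C.n + 1) → ℤˣ := fun k => ∏ j ∈ Finset.range k.val, s' j with htdef
    have hs'eq : ∀ k : Fin (C.n + 1), s' k.val = σ (C.edge k) := by
      intro k; simp only [hs'def, Fin.cast_val_eq_self]
    have hprodrange : ∏ j ∈ Finset.range (C.n + 1), s' j = 1 := by
      rw [← Fin.prod_univ_eq_prod_range s' (C.n + 1)]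
      rw [Finset.prod_congr rfl fun i _ => hs'eq i]
      exact hprod
    have hkey : ∀ k : Fin (C.n + 1), σ (C.edge (k - 1)) * t (k - 1) = t k := by
      intro k
      by_cases hk : k = 0
      · subst hk
        have hval : ((0 - 1 : Fin (C.n + 1))).val = C.n := by
          rw [Fin.coe_sub_one, if_pos rfl]
        have h1 : t (0 - 1) = ∏ j ∈ Finset.range C.n, s' j := by
          simp only [htdef, hval]
        have h2 : t 0 = 1 := by simp [htdef]
        rw [← hs'eq (0 - 1), hval, h1, h2, mul_comm, ← Finset.prod_range_succ]
        exact hprodrange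
      · have hval : (k - 1).val = k.val - 1 := by rw [Fin.coe_sub_one, if_neg hk]
        have hkpos : 1 ≤ k.val :=
          Nat.one_le_iff_ne_zero.mpr fun h => hk (Fin.ext h)
        have h2 : ∏ j ∈ Finset.range k.val, s' j
            = (∏ j ∈ Finset.range (k.val - 1), s' j) * s' (k.val - 1) := by
          conv_lhs => rw [show k.val = (k.val - 1) + 1 from by omega]
          rw [Finset.prod_range_succ]
        rw [← hs'eq (k - 1), hval]
        simp only [htdef, hval]
        rw [h2, mul_comm]
    set τ : E → V → ℤˣ := fun e w =>
      if h : ∃ i, C.edge i = e then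
        (if w = C.vert h.choose then t h.choose else -σ e * t h.choose)
      else τ' e w with hτdef
    have hchoose : ∀ (i : Fin (C.n + 1)) (h : ∃ j, C.edge j = C.edge i), h.choose = i :=
      fun i h => C.edge_inj h.choose_spec
    have hτC : ∀ (i : Fin (C.n + 1)) (w : V),
        τ (C.edge i) w = if w = C.vert i then t i else -σ (C.edge i) * t i := by
      intro i w
      have h : ∃ j, C.edge j = C.edge i := ⟨i, rfl⟩
      simp only [hτdef, dif_pos h, hchoose i h]
    have hτout : ∀ e, e ∉ C.edges → ∀ w, τ e w = τ' e w := by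
      intro e he w
      have h : ¬ ∃ i, C.edge i = e := fun h => he (C.mem_edges.mpr h)
      simp only [hτdef, dif_neg h]
    refine ⟨τ, ?_, ?_⟩
    · intro e u v hends
      by_cases he : ∃ i, C.edge i = e
      · obtain ⟨i, rfl⟩ := he
        have h1 : s(u, v) = s(C.vert i, C.vert (i + 1)) := hends.symm.trans (C.ends_eq i)
        have hne' : C.vert (i + 1) ≠ C.vert i := fun h => C.add_one_ne i (C.vert_inj h)
        rcases Sym2.eq_iff.mp h1 with ⟨h2, h3⟩ | ⟨h2, h3⟩
        · rw [hτC, hτC, h2, h3, if_pos rfl, if_neg hne']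
          rw [mul_comm, mul_assoc, Int.units_mul_self, mul_one]
        · rw [hτC, hτC, h2, h3, if_neg hne', if_pos rfl, mul_assoc,
            Int.units_mul_self, mul_one]
      · have hnotin : e ∉ C.edges := fun h => he (C.mem_edges.mp h)
        rw [hτout e hnotin, hτout e hnotin]
        exact hτ'or e u v hends
    · intro v
      have hsplit : G.incEdges v ∩ F
          = (G.incEdges v ∩ C.edges) ∪ (G.incEdges v ∩ F') := by
        rw [← Finset.inter_union_distrib_left, Finset.union_sdiff_of_subset hsub]
      have hdisj : Disjoint (G.incEdges v ∩ C.edges) (G.incEdges v ∩ F') := by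
        rw [Finset.disjoint_left]
        intro e h1 h2
        exact (Finset.mem_sdiff.mp (Finset.mem_inter.mp h2).2).2
          (Finset.mem_inter.mp h1).2
      rw [hsplit, Finset.sum_union hdisj]
      have hsum2 : ∑ e ∈ G.incEdges v ∩ F', ((τ e v : ℤˣ) : ℤ) = 0 := by
        rw [Finset.sum_congr rfl fun e he => by
          rw [hτout e (Finset.mem_sdiff.mp (Finset.mem_inter.mp he).2).2 v]]
        exact hτ'sum v
      rw [hsum2, add_zero]
      by_cases hv : ∃ k, v = C.vert k
      · obtain ⟨k, rfl⟩ := hv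
        rw [C.inc_inter_eq_pair k,
          Finset.sum_pair (fun h => C.sub_one_ne k (C.edge_inj h))]
        rw [hτC, hτC, if_pos rfl,
          if_neg (fun h : C.vert k = C.vert (k - 1) =>
            C.sub_one_ne k (C.vert_inj h.symm))]
        rw [← hkey k]
        push_cast
        ring
      · push_neg at hv
        rw [C.inc_inter_eq_empty hv, Finset.sum_empty]

end Multigraph

open Multigraph

/-- Let `(G, σ)` be a signed graph.  If `(G, σ)` is the union of two balanced eulerian
subgraphs — i.e. there are edge sets `E₁, E₂` covering `E(G)` such that every vertex
is incident with an even number of edges of `Eᵢ` and the subgraph `(G[Eᵢ], σ)` is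
balanced (every circuit within `Eᵢ` has an even number of negative edges), for
`i = 1, 2` — then `F(G, σ) ≤ 4`, i.e. `(G, σ)` admits an integer nowhere-zero
`4`-flow. -/
theorem stmt19 {V E : Type} [Fintype V] [Fintype E] [DecidableEq V] [DecidableEq E]
    (G : Multigraph V E) (σ : E → ℤˣ) (E₁ E₂ : Finset E)
    (heul₁ : ∀ v, Even ((G.incEdges v ∩ E₁).card))
    (heul₂ : ∀ v, Even ((G.incEdges v ∩ E₂).card))
    (hcover : E₁ ∪ E₂ = Finset.univ)
    (hbal₁ : G.BalancedOn σ E₁) (hbal₂ : G.BalancedOn σ E₂) :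
    G.HasIntNZFlow σ 4 := by
  classical
  obtain ⟨τ₁, hor₁, hsum₁⟩ :=
    G.exists_good_orientation σ E₁.card E₁ le_rfl heul₁ hbal₁
  obtain ⟨τ₂, hor₂, hsum₂⟩ :=
    G.exists_good_orientation σ E₂.card E₂ le_rfl heul₂ hbal₂
  set ε : E → ℤˣ := fun e => τ₁ e (pr (G.ends e)).1 * τ₂ e (pr (G.ends e)).1 with hεdef
  have key : ∀ (w x1 y1 x2 y2 : ℤˣ), x1 * y1 = w → x2 * y2 = w →
      x1 * x2 = y1 * y2 := by
    intro w x1 y1 x2 y2 hx hy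
    rw [← hx] at hy
    rcases Int.units_eq_one_or x1 with h | h <;> subst h <;>
      rcases Int.units_eq_one_or y1 with h | h <;> subst h <;>
      rcases Int.units_eq_one_or x2 with h | h <;> subst h <;>
      rcases Int.units_eq_one_or y2 with h | h <;> subst h <;>
      first
        | decide
        | exact absurd hy (by decide)
  have hεspec : ∀ e v, v ∈ G.ends e → ε e = τ₁ e v * τ₂ e v := by
    intro e v hv
    have hp := pr_spec (G.ends e)
    rw [hp, Sym2.mem_iff] at hv
    rcases hv with hv | hv
    · rw [hεdef]; simp only; rw [hv]
    · rw [hεdef]; simp only; rw [hv]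
      exact key (-σ e) _ _ _ _ (hor₁ e _ _ hp) (hor₂ e _ _ hp)
  refine ⟨fun e => (if e ∈ E₁ then (1 : ℤ) else 0)
      + 2 * ((ε e : ℤˣ) : ℤ) * (if e ∈ E₂ then (1 : ℤ) else 0), τ₁, hor₁, ?_, ?_⟩
  · intro v
    rw [boundary]
    simp only [Int.cast_id]
    have hterm : ∀ e ∈ G.incEdges v,
        ((τ₁ e v : ℤˣ) : ℤ) *
          ((if e ∈ E₁ then (1 : ℤ) else 0)
            + 2 * ((ε e : ℤˣ) : ℤ) * (if e ∈ E₂ then (1 : ℤ) else 0))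
        = (if e ∈ E₁ then (((τ₁ e v : ℤˣ) : ℤ)) else 0)
          + 2 * (if e ∈ E₂ then (((τ₂ e v : ℤˣ) : ℤ)) else 0) := by
      intro e he
      have hv : v ∈ G.ends e := mem_incEdges.mp he
      have hε2 : ((τ₁ e v : ℤˣ) : ℤ) * ((ε e : ℤˣ) : ℤ) = ((τ₂ e v : ℤˣ) : ℤ) := by
        rw [← Units.val_mul, hεspec e v hv]
        congr 1
        rw [← mul_assoc, Int.units_mul_self, one_mul]
      by_cases h1 : e ∈ E₁ <;> by_cases h2 : e ∈ E₂ <;>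
        simp only [h1, h2, if_true, if_false, ite_true, ite_false, mul_one, mul_zero,
          add_zero, zero_add] <;>
        linear_combination 2 * hε2
    rw [Finset.sum_congr rfl hterm, Finset.sum_add_distrib]
    rw [Finset.sum_ite_mem, ← Finset.mul_sum, Finset.sum_ite_mem]
    rw [hsum₁ v, hsum₂ v, mul_zero, add_zero]
  · intro e
    have hecov : e ∈ E₁ ∪ E₂ := by rw [hcover]; exact Finset.mem_univ e
    rw [Finset.mem_union] at hecov
    have hεval : ((ε e : ℤˣ) : ℤ) = 1 ∨ ((ε e : ℤˣ) : ℤ) = -1 := by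
      rcases Int.units_eq_one_or (ε e) with h | h <;> rw [h] <;> simp
    rcases hεval with h3 | h3 <;>
      by_cases h1 : e ∈ E₁ <;> by_cases h2 : e ∈ E₂ <;>
      simp only [h1, h2, h3, if_true, if_false, ite_true, ite_false] <;>
      first
        | exact absurd (hecov.resolve_left h1) h2
        | norm_num
end
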